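/- arXiv:2103.09715 — 8 statements merged into one kernel-verified Lean document; each statement's English description precedes it below -/
import Mathlib

section
/- Let (T,χ,L) be a tree H-decomposition of a graph G and let L* ⊆ L be a set of base vertices such that G[L*] is connected. Then there is a unique node t of T with L* ⊆ χ(t), no vertex of L* occurs in any other bag, and N_G(L*) \ L ⊆ χ(t) \ L. -/
/-- A class of graphs: a predicate on simple graphs over every vertex type. -/
def GraphClass : Type 1 := ∀ (V : Type), SimpleGraph V → Prop

/-- The open neighborhood of a vertex set `S`: all vertices outside `S` that are
adjacent to some vertex of `S`. -/
def setNbhd {V : Type} (G : SimpleGraph V) (S : Set V) : Set V :=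
  {v : V | v ∉ S ∧ ∃ u ∈ S, G.Adj u v}

/-- A tree decomposition of a graph `G`. -/
structure TreeDecomp {V : Type} (G : SimpleGraph V) (T : Type) (Tg : SimpleGraph T) : Type where
  bag : T → Set V
  isTree : Tg.Connected ∧ Tg.IsAcyclic
  bags_cover : ∀ v : V, ∃ t : T, v ∈ bag t
  edges_covered : ∀ ⦃u v : V⦄, G.Adj u v → ∃ t : T, u ∈ bag t ∧ v ∈ bag t
  bags_connected : ∀ v : V, (Tg.induce {t : T | v ∈ bag t}).Connected

/-- A tree `H`-decomposition. -/
structure THDecomp (H : GraphClass) {V : Type} (G : SimpleGraph V) (T : Type)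
    (Tg : SimpleGraph T) extends TreeDecomp G T Tg : Type where
  base : Set V
  base_unique : ∀ v ∈ base, ∃! t : T, v ∈ bag t
  base_leaf : ∀ v ∈ base, ∀ t : T, v ∈ bag t → (Tg.neighborSet t).Subsingleton
  base_in_H : ∀ t : T, H _ (G.induce (bag t ∩ base))

/-- Let `(T, χ, L)` be a tree `H`-decomposition of a graph `G` and let `L* ⊆ L` be a set of
base vertices such that `G[L*]` is connected. Then there is a unique node `t` with
`L* ⊆ χ(t)`, no vertex of `L*` occurs in any other bag, and `N_G(L*) \ L ⊆ χ(t) \ L`. -/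
theorem connected_base_set_in_unique_bag (H : GraphClass) {V : Type} (G : SimpleGraph V)
    (T : Type) (Tg : SimpleGraph T) (D : THDecomp H G T Tg)
    (Lstar : Set V) (hsub : Lstar ⊆ D.base) (hconn : (G.induce Lstar).Connected) :
    ∃ t : T, Lstar ⊆ D.bag t ∧
      (∀ t' : T, (∃ v ∈ Lstar, v ∈ D.bag t') → t' = t) ∧
      setNbhd G Lstar \ D.base ⊆ D.bag t \ D.base := by
  -- every base vertex lies in a single bag
  have huniq : ∀ v ∈ D.base, ∀ s s' : T, v ∈ D.bag s → v ∈ D.bag s' → s = s' := by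
    intro v hv s s' hs hs'
    obtain ⟨t0, _, h⟩ := D.base_unique v hv
    rw [h s hs, h s' hs']
  obtain ⟨⟨v0, hv0⟩⟩ := hconn.nonempty
  obtain ⟨t, ht, -⟩ := D.base_unique v0 (hsub hv0)
  have key : ∀ a b : ↥Lstar, (G.induce Lstar).Reachable a b →
      a.1 ∈ D.bag t → b.1 ∈ D.bag t := by
    intro a b ⟨w⟩
    induction w with
    | nil => exact fun h => h
    | cons hadj _ ih =>
      rename_i x y _ _
      intro hx
      apply ih
      have hGadj : G.Adj x.1 y.1 := hadj
      obtain ⟨s, hxs, hys⟩ := D.edges_covered hGadj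
      have : s = t := huniq x.1 (hsub x.2) s t hxs hx
      rwa [this] at hys
  have hall : ∀ v ∈ Lstar, v ∈ D.bag t := by
    intro v hv
    exact key ⟨v0, hv0⟩ ⟨v, hv⟩ (hconn.preconnected _ _) ht
  refine ⟨t, hall, ?_, ?_⟩
  · rintro t' ⟨v, hv, hvt'⟩
    exact huniq v (hsub hv) t' t hvt' (hall v hv)
  · rintro w ⟨⟨hwL, u, hu, hadj⟩, hwB⟩
    obtain ⟨s, hus, hws⟩ := D.edges_covered hadj
    have : s = t := huniq u (hsub hu) s t hus (hall u hu)
    exact ⟨this ▸ hws, hwB⟩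
end

section
/- Let G be a graph, let X, Y ⊆ V(G) be disjoint vertex sets, and let S be an (X,Y)-separator. Then there is an important (X,Y)-separator S′ with |S′| ≤ |S| such that the set of vertices reachable from X in G − S is contained in the set of vertices reachable from X in G − S′, and S′ equals the neighborhood of the latter reachability set. -/
/-- `reachSet G S X` is the set of vertices reachable from `X \ S` in `G - S`. -/
def reachSet {V : Type} (G : SimpleGraph V) (S X : Set V) : Set V :=
  {v : V | ∃ (hv : v ∉ S) (u : V) (_ : u ∈ X) (hu : u ∉ S),
    (G.induce {x : V | x ∉ S}).Reachable ⟨u, hu⟩ ⟨v, hv⟩}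

/-- `S` is an `(X,Y)`-separator: `S` is disjoint from `X ∪ Y` and `G - S` contains no
path from a vertex of `X` to a vertex of `Y`. -/
def IsSeparator {V : Type} (G : SimpleGraph V) (X Y S : Set V) : Prop :=
  Disjoint S (X ∪ Y) ∧ ∀ y ∈ Y, y ∉ reachSet G S X

/-- `S` is an important `(X,Y)`-separator: it is an inclusion-wise minimal
`(X,Y)`-separator and there is no `(X,Y)`-separator `S'` with `|S'| ≤ |S|` whose
reachability set from `X` strictly contains that of `S`. -/
def IsImportantSeparator {V : Type} (G : SimpleGraph V) (X Y S : Set V) : Prop :=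
  IsSeparator G X Y S ∧ (∀ S' : Set V, S' ⊂ S → ¬ IsSeparator G X Y S') ∧
    ¬ ∃ S' : Set V, IsSeparator G X Y S' ∧ S'.ncard ≤ S.ncard ∧
      reachSet G S X ⊂ reachSet G S' X

-- monotonicity
lemma reach_mono {V : Type} (G : SimpleGraph V) (X : Set V) {S T : Set V} (h : S ⊆ T) :
    reachSet G T X ⊆ reachSet G S X := by
  rintro v ⟨hv, u, huX, hu, hr⟩
  refine ⟨fun hvS => hv (h hvS), u, huX, fun huS => hu (h huS), ?_⟩
  exact hr.map (⟨fun a => ⟨a.1, fun hs => a.2 (h hs)⟩, by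
      rintro ⟨a, ha⟩ ⟨b, hb⟩ hab
      simpa using hab⟩ : G.induce {x : V | x ∉ T} →g G.induce {x : V | x ∉ S})

-- closure under adjacency
lemma reach_closed {V : Type} {G : SimpleGraph V} {X S : Set V} {u v : V}
    (hu : u ∈ reachSet G S X) (hadj : G.Adj u v) (hv : v ∉ S) : v ∈ reachSet G S X := by
  obtain ⟨hu', w, hwX, hw, hr⟩ := hu
  exact ⟨hv, w, hwX, hw, hr.trans (SimpleGraph.Adj.reachable (by simpa using hadj))⟩

lemma mem_self_reach {V : Type} {G : SimpleGraph V} {X S : Set V} {u : V}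
    (huX : u ∈ X) (hu : u ∉ S) : u ∈ reachSet G S X :=
  ⟨hu, u, huX, hu, SimpleGraph.Reachable.refl _⟩

lemma reach_not_mem {V : Type} {G : SimpleGraph V} {X S : Set V} {v : V}
    (hv : v ∈ reachSet G S X) : v ∉ S := hv.1

-- setNbhd of reach is inside S
lemma nbhd_reach_subset {V : Type} {G : SimpleGraph V} {X S : Set V} :
    setNbhd G (reachSet G S X) ⊆ S := by
  rintro v ⟨hv, u, hu, hadj⟩
  by_contra hvS
  exact hv (reach_closed hu hadj hvS)

-- reach of nbhd equals reach (given X disjoint from S)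
lemma reach_nbhd_subset {V : Type} {G : SimpleGraph V} {X S : Set V}
    (hXS : ∀ x ∈ X, x ∉ S) :
    reachSet G (setNbhd G (reachSet G S X)) X ⊆ reachSet G S X := by
  set T := setNbhd G (reachSet G S X) with hT
  rintro v ⟨hv, u, huX, hu, hr⟩
  obtain ⟨p⟩ := hr
  have key : ∀ (a b : {x : V | x ∉ T}), (G.induce {x : V | x ∉ T}).Walk a b →
      a.1 ∈ reachSet G S X → b.1 ∈ reachSet G S X := by
    intro a b p
    induction p with
    | nil => exact fun h => h
    | cons hadj q ih =>
      rename_i c d e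
      intro hc
      apply ih
      have hadj' : G.Adj c.1 d.1 := by simpa using hadj
      by_cases hdS : d.1 ∈ S
      · exfalso
        apply d.2
        exact ⟨fun hr => (reach_not_mem hr) hdS, c.1, hc, hadj'⟩
      · exact reach_closed hc hadj' hdS
  exact key _ _ p (mem_self_reach huX (hXS u huX))

/-- For any `(X,Y)`-separator `S` there is an important `(X,Y)`-separator `S'` with
`|S'| ≤ |S|` such that `R_S(X) ⊆ R_{S'}(X)` and `S' = N_G(R_{S'}(X))`. -/
theorem exists_important_separator {V : Type} [Fintype V] (G : SimpleGraph V)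
    (X Y S : Set V) (hXY : Disjoint X Y) (hS : IsSeparator G X Y S) :
    ∃ S' : Set V, IsImportantSeparator G X Y S' ∧ S'.ncard ≤ S.ncard ∧
      reachSet G S X ⊆ reachSet G S' X ∧ S' = setNbhd G (reachSet G S' X) := by
  classical
  set F : Set (Set V) :=
    {T | IsSeparator G X Y T ∧ T.ncard ≤ S.ncard ∧ reachSet G S X ⊆ reachSet G T X} with hFdef
  have hSF : S ∈ F := ⟨hS, le_refl _, subset_refl _⟩
  set N : Set ℕ := (fun T => (reachSet G T X).ncard) '' F with hNdef
  have hNne : N.Nonempty := ⟨_, S, hSF, rfl⟩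
  have hNbdd : BddAbove N := by
    refine ⟨Fintype.card V, ?_⟩
    rintro n ⟨T, hT, rfl⟩
    calc (reachSet G T X).ncard ≤ (Set.univ : Set V).ncard :=
          Set.ncard_le_ncard (Set.subset_univ _) Set.finite_univ
      _ = Fintype.card V := by rw [Set.ncard_univ, Nat.card_eq_fintype_card]
  obtain ⟨T, hTF, hTmax⟩ := Nat.sSup_mem hNne hNbdd
  have hub : ∀ T' ∈ F, (reachSet G T' X).ncard ≤ (reachSet G T X).ncard := by
    intro T' hT'
    change (reachSet G T X).ncard = sSup N at hTmax
    rw [hTmax]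
    exact le_csSup hNbdd ⟨T', hT', rfl⟩
  obtain ⟨hTsep, hTcard, hTreach⟩ := hTF
  set T₀ := setNbhd G (reachSet G T X) with hT₀def
  have hT₀T : T₀ ⊆ T := nbhd_reach_subset
  have hXT : ∀ x ∈ X, x ∉ T := fun x hx hxT =>
    Set.disjoint_left.mp hTsep.1 hxT (Or.inl hx)
  have hre : reachSet G T₀ X = reachSet G T X :=
    Set.Subset.antisymm (reach_nbhd_subset hXT) (reach_mono G X hT₀T)
  have hT₀sep : IsSeparator G X Y T₀ :=
    ⟨hTsep.1.mono_left hT₀T, fun y hy => by rw [hre]; exact hTsep.2 y hy⟩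
  have hT₀card : T₀.ncard ≤ T.ncard := Set.ncard_le_ncard hT₀T (Set.toFinite T)
  have hSreach : reachSet G S X ⊆ reachSet G T₀ X := by rw [hre]; exact hTreach
  have key : ∀ S'' : Set V, IsSeparator G X Y S'' → S''.ncard ≤ T₀.ncard →
      ¬ (reachSet G T₀ X ⊂ reachSet G S'' X) := by
    intro S'' hsep hcard hss
    have hF : S'' ∈ F :=
      ⟨hsep, hcard.trans (hT₀card.trans hTcard), hSreach.trans hss.subset⟩
    have h1 := hub S'' hF
    have hlt : (reachSet G T₀ X).ncard < (reachSet G S'' X).ncard :=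
      Set.ncard_lt_ncard hss (Set.toFinite _)
    rw [hre] at hlt
    omega
  have hmin : ∀ S'' : Set V, S'' ⊂ T₀ → ¬ IsSeparator G X Y S'' := by
    intro S'' hss hsep
    obtain ⟨v, hvT₀, hvS''⟩ := Set.exists_of_ssubset hss
    obtain ⟨hvR, u, huR, hadj⟩ := hvT₀
    have hu0 : u ∈ reachSet G S'' X := reach_mono G X hss.subset (by rw [hre]; exact huR)
    have hv : v ∈ reachSet G S'' X := reach_closed hu0 hadj hvS''
    have hne : reachSet G T₀ X ≠ reachSet G S'' X := fun h => hvR (by rw [← hre, h]; exact hv)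
    exact key S'' hsep (Set.ncard_le_ncard hss.subset (Set.toFinite _))
      (ssubset_of_subset_of_ne (reach_mono G X hss.subset) hne)
  refine ⟨T₀, ⟨hT₀sep, hmin, ?_⟩, hT₀card.trans hTcard, hSreach, ?_⟩
  · rintro ⟨S'', hsep, hcard, hss⟩
    exact key S'' hsep hcard hss
  · rw [hT₀def, hre]
end

section
/- If v is a simplicial vertex of a graph G, then G is chordal if and only if G − v is chordal. -/
/-- A graph is chordal if it contains no hole, i.e. no induced cycle of length at least
four: there is no graph embedding of the `n`-cycle for any `n ≥ 4`. -/
def IsChordal {α : Type} (G : SimpleGraph α) : Prop :=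
  ∀ n : ℕ, 4 ≤ n → IsEmpty (SimpleGraph.cycleGraph n ↪g G)

/-- If `v` is a simplicial vertex of a graph `G` (its open neighborhood is a clique),
then `G` is chordal if and only if `G - v` is chordal. -/
theorem chordal_iff_delete_simplicial {α : Type} (G : SimpleGraph α) (v : α)
    (hv : G.IsClique (G.neighborSet v)) :
    IsChordal G ↔ IsChordal (G.induce {x : α | x ≠ v}) := by
  constructor
  · intro h n hn
    refine ⟨fun f => (h n hn).false (f.trans (SimpleGraph.Embedding.induce _))⟩
  · intro h n hn
    refine ⟨fun f => ?_⟩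
    obtain ⟨m, rfl⟩ := Nat.exists_eq_add_of_le' hn
    -- first: v is not in the image of f
    have hne : ∀ i, f i ≠ v := by
      intro i hi
      have h1 : (SimpleGraph.cycleGraph (m + 4)).Adj (i - 1) i := by
        rw [SimpleGraph.cycleGraph_adj']
        right
        have : i - (i - 1) = 1 := by open Fin.CommRing in ring
        rw [this]
        simp [Fin.val_one]
      have h2 : (SimpleGraph.cycleGraph (m + 4)).Adj i (i + 1) := by
        rw [SimpleGraph.cycleGraph_adj']
        right
        have : (i + 1) - i = 1 := by open Fin.CommRing in ring
        rw [this]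
        simp [Fin.val_one]
      have hm1 : G.Adj v (f (i - 1)) := by
        have := f.map_adj_iff.mpr h1
        rw [hi] at this
        exact this.symm
      have hm2 : G.Adj v (f (i + 1)) := by
        have := f.map_adj_iff.mpr h2
        rw [hi] at this
        exact this
      have hij : (i - 1 : Fin (m + 4)) ≠ i + 1 := by
        intro hEq
        have : (i + 1) - (i - 1) = 0 := by rw [hEq]; open Fin.CommRing in ring
        have h2' : ((2 : Fin (m + 4))) = 0 := by
          have e : (i + 1) - (i - 1) = 2 := by open Fin.CommRing in ring
          rw [e] at this; exact this
        have := congrArg Fin.val h2'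
        simp [Fin.val_two] at this
        rw [Nat.mod_eq_of_lt (by omega)] at this; omega
      have hfij : f (i - 1) ≠ f (i + 1) := fun hEq => hij (f.injective hEq)
      have hadj : G.Adj (f (i - 1)) (f (i + 1)) := hv hm1 hm2 hfij
      have : (SimpleGraph.cycleGraph (m + 4)).Adj (i - 1) (i + 1) :=
        f.map_adj_iff.mp hadj
      rw [SimpleGraph.cycleGraph_adj'] at this
      rcases this with h' | h'
      · have e : (i - 1) - (i + 1) = -2 := by open Fin.CommRing in ring
        rw [e] at h'
        have : ((-2 : Fin (m + 4))).val = (m + 4) - 2 := by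
          simp [Fin.neg_def, Fin.val_two]
          rw [Nat.mod_eq_of_lt (show 2 < m + 4 by omega), Nat.mod_eq_of_lt (show m + 4 - 2 < m + 4 by omega)]
          omega
        omega
      · have e : (i + 1) - (i - 1) = 2 := by open Fin.CommRing in ring
        rw [e] at h'
        rw [Fin.val_two] at h'
        omega
    -- build an embedding into the induced subgraph
    have hemb : SimpleGraph.cycleGraph (m + 4) ↪g (G.induce {x : α | x ≠ v}) :=
      { toFun := fun i => ⟨f i, hne i⟩
        inj' := fun a b hab => f.injective (congrArg Subtype.val hab)
        map_rel_iff' := by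
          intro a b
          simp only [SimpleGraph.comap_adj, Function.Embedding.coeFn_mk]
          exact f.map_adj_iff }
    exact (h (m + 4) (by omega)).false hemb
end

section
/- If G is a chordal graph whose vertex set is partitioned into sets A and B such that B is an independent set in G and no vertex of B is simplicial in G, then |B| < |A|. -/
open SimpleGraph List

lemma fin_sub_val_eq_one {n : ℕ} (hn : 2 ≤ n) (u v : Fin n) :
    (u - v).val = 1 ↔ (u.val = v.val + 1 ∨ (u.val = 0 ∧ v.val + 1 = n)) := by
  have hu := u.isLt
  have hv := v.isLt
  rw [Fin.sub_def]
  simp only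
  rcases le_or_gt v.val u.val with h | h
  · have : (u.val + (n - v.val)) = (u.val - v.val) + n := by omega
    rw [Nat.add_comm, this, Nat.add_mod_right, Nat.mod_eq_of_lt (by omega)]
    omega
  · rw [Nat.mod_eq_of_lt (by omega)]
    omega

lemma no_induced_cycle_list {α : Type} {G : SimpleGraph α} (hG : IsChordal G)
    (L : List α) (h4 : 4 ≤ L.length) (hnd : L.Nodup)
    (hadj : ∀ i j : Fin L.length, G.Adj (L.get i) (L.get j) ↔
      (i.val + 1 = j.val ∨ j.val + 1 = i.val ∨
        (i.val = 0 ∧ j.val + 1 = L.length) ∨ (j.val = 0 ∧ i.val + 1 = L.length))) :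
    False := by
  refine (hG L.length h4).elim ?_
  refine ⟨⟨L.get, (List.nodup_iff_injective_get.mp hnd)⟩, ?_⟩
  intro i j
  rw [SimpleGraph.cycleGraph_adj']
  simp only [Function.Embedding.coeFn_mk]
  rw [hadj i j, fin_sub_val_eq_one (by omega) i j, fin_sub_val_eq_one (by omega) j i]
  omega

def sfun {α : Type} [Inhabited α] (s t : α) (l : List α) (i : ℕ) : α :=
  if i = 0 then s else if i ≤ l.length then l[i-1]! else t

def gfun {α : Type} [Inhabited α] (s t : α) (la lb : List α) (i : ℕ) : α :=
  if i ≤ la.length + 1 then sfun s t la i else lb[la.length + lb.length + 1 - i]!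

lemma sandwich_get {α : Type} [Inhabited α] (s t : α) (l : List α) (m : ℕ)
    (h : m < (s :: l ++ [t]).length) :
    (s :: l ++ [t])[m]'h = sfun s t l m := by
  have hlen : (s :: l ++ [t]).length = l.length + 2 := by simp
  rcases Nat.eq_zero_or_pos m with rfl | hm
  · simp [sfun]
  · obtain ⟨k, rfl⟩ : ∃ k, m = k + 1 := ⟨m - 1, by omega⟩
    simp only [cons_append, List.getElem_cons_succ, sfun]
    rw [if_neg (by omega)]
    by_cases hk : k < l.length
    · rw [List.getElem_append_left hk]
      rw [if_pos (by omega)]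
      rw [getElem!_pos l _ (by omega)]
      simp
    · rw [List.getElem_append_right (by omega)]
      rw [if_neg (by omega)]
      simp

lemma two_paths_false {α : Type} {G : SimpleGraph α} (hG : IsChordal G)
    (s t : α) (la lb : List α) (hka : la ≠ []) (hkb : lb ≠ [])
    (hA : ∀ i j : ℕ, (hi : i < (s :: la ++ [t]).length) → (hj : j < (s :: la ++ [t]).length) →
      i < j → (G.Adj ((s :: la ++ [t])[i]'hi) ((s :: la ++ [t])[j]'hj) ↔ i + 1 = j))
    (hB : ∀ i j : ℕ, (hi : i < (s :: lb ++ [t]).length) → (hj : j < (s :: lb ++ [t]).length) →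
      i < j → (G.Adj ((s :: lb ++ [t])[i]'hi) ((s :: lb ++ [t])[j]'hj) ↔ i + 1 = j))
    (hda : (s :: la ++ [t]).Nodup) (hdb : (s :: lb ++ [t]).Nodup)
    (hcross : ∀ x ∈ la, ∀ y ∈ lb, ¬ G.Adj x y ∧ x ≠ y) : False := by
  have : Inhabited α := ⟨s⟩
  have hka1 : 1 ≤ la.length := List.length_pos_iff.mpr hka
  have hkb1 : 1 ≤ lb.length := List.length_pos_iff.mpr hkb
  have hAlen : (s :: la ++ [t]).length = la.length + 2 := by simp
  have hBlen : (s :: lb ++ [t]).length = lb.length + 2 := by simp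
  have hA' : ∀ i j : ℕ, i < j → j < la.length + 2 →
      (G.Adj (sfun s t la i) (sfun s t la j) ↔ i + 1 = j) := by
    intro i j hij hj
    rw [← sandwich_get s t la i (by omega), ← sandwich_get s t la j (by omega)]
    exact hA i j (by omega) (by omega) hij
  have hB' : ∀ i j : ℕ, i < j → j < lb.length + 2 →
      (G.Adj (sfun s t lb i) (sfun s t lb j) ↔ i + 1 = j) := by
    intro i j hij hj
    rw [← sandwich_get s t lb i (by omega), ← sandwich_get s t lb j (by omega)]
    exact hB i j (by omega) (by omega) hij
  have hla_nd : la.Nodup := ((List.nodup_append.mp (List.Nodup.of_cons hda)).1)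
  have hlb_nd : lb.Nodup := ((List.nodup_append.mp (List.Nodup.of_cons hdb)).1)
  have hs_lb : s ∉ lb := fun h => (List.nodup_cons.mp hdb).1 (by simp [h])
  have ht_lb : t ∉ lb := fun h =>
    (List.disjoint_of_nodup_append (List.Nodup.of_cons hdb)) h (by simp)
  have hLlen : ((s :: la ++ [t]) ++ lb.reverse).length = la.length + lb.length + 2 := by
    simp; omega
  have hLg : ∀ (i : ℕ) (h : i < ((s :: la ++ [t]) ++ lb.reverse).length),
      ((s :: la ++ [t]) ++ lb.reverse)[i]'h = gfun s t la lb i := by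
    intro i h
    rw [hLlen] at h
    by_cases hi : i ≤ la.length + 1
    · rw [List.getElem_append_left (by rw [hAlen]; omega)]
      rw [sandwich_get s t la i (by rw [hAlen]; omega)]
      rw [gfun, if_pos hi]
    · rw [List.getElem_append_right (by rw [hAlen]; omega)]
      rw [List.getElem_reverse]
      rw [gfun, if_neg hi]
      rw [getElem!_pos lb _ (by omega)]
      congr 1
      rw [hAlen]
      omega
  -- fb description of the tail part of g
  have hgb0 : gfun s t la lb 0 = sfun s t lb 0 := by
    rw [gfun, if_pos (by omega), sfun, sfun, if_pos rfl, if_pos rfl]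
  have hgb : ∀ i : ℕ, la.length + 1 ≤ i → i < la.length + lb.length + 2 →
      gfun s t la lb i = sfun s t lb (la.length + lb.length + 2 - i) := by
    intro i h1 h2
    rcases eq_or_lt_of_le h1 with rfl | h1'
    · rw [gfun, if_pos (le_refl _), sfun, sfun]
      rw [if_neg (by omega), if_neg (by omega), if_neg (by omega), if_neg (by omega)]
    · rw [gfun, if_neg (by omega), sfun]
      rw [if_neg (by omega), if_pos (by omega)]
      congr 1
      omega
  have hmem_a : ∀ i : ℕ, 1 ≤ i → i ≤ la.length → gfun s t la lb i ∈ la := by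
    intro i h1 h2
    rw [gfun, if_pos (by omega), sfun, if_neg (by omega), if_pos h2]
    rw [getElem!_pos la _ (by omega)]
    exact List.getElem_mem _
  have hmem_b : ∀ i : ℕ, la.length + 2 ≤ i → i < la.length + lb.length + 2 →
      gfun s t la lb i ∈ lb := by
    intro i h1 h2
    rw [gfun, if_neg (by omega)]
    rw [getElem!_pos lb _ (by omega)]
    exact List.getElem_mem _
  have hndL : ((s :: la ++ [t]) ++ lb.reverse).Nodup := by
    rw [List.nodup_append]
    refine ⟨hda, List.nodup_reverse.mpr hlb_nd, ?_⟩
    intro x hxA y hxB hxy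
    subst hxy
    rw [List.mem_reverse] at hxB
    simp only [List.cons_append, List.mem_cons, List.mem_append, List.mem_singleton] at hxA
    rcases hxA with rfl | hxla | rfl | h0
    · exact hs_lb hxB
    · exact (hcross x hxla x hxB).2 rfl
    · exact ht_lb hxB
    · simp at h0
  have key : ∀ i j : ℕ, i ≤ j → j < la.length + lb.length + 2 →
      (G.Adj (gfun s t la lb i) (gfun s t la lb j) ↔ (i + 1 = j ∨ j + 1 = i ∨
        (i = 0 ∧ j + 1 = la.length + lb.length + 2) ∨
        (j = 0 ∧ i + 1 = la.length + lb.length + 2))) := by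
    intro i j hij hj
    rcases eq_or_lt_of_le hij with rfl | hlt
    · exact iff_of_false (G.irrefl) (by omega)
    · by_cases hj1 : j ≤ la.length + 1
      · have e1 : gfun s t la lb i = sfun s t la i := by rw [gfun, if_pos (by omega)]
        have e2 : gfun s t la lb j = sfun s t la j := by rw [gfun, if_pos hj1]
        rw [e1, e2, hA' i j hlt (by omega)]
        omega
      · by_cases hi1 : la.length + 1 ≤ i
        · rw [hgb i hi1 (by omega), hgb j (by omega) hj]
          rw [G.adj_comm]
          rw [hB' (la.length + lb.length + 2 - j) (la.length + lb.length + 2 - i)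
            (by omega) (by omega)]
          omega
        · by_cases hi0 : i = 0
          · subst hi0
            rw [hgb0, hgb j (by omega) hj]
            rw [hB' 0 (la.length + lb.length + 2 - j) (by omega) (by omega)]
            omega
          · refine iff_of_false ?_ (by omega)
            exact (hcross _ (hmem_a i (by omega) (by omega)) _
              (hmem_b j (by omega) (by omega))).1
  refine no_induced_cycle_list hG ((s :: la ++ [t]) ++ lb.reverse) (by omega) hndL ?_
  intro i j
  obtain ⟨i, hi⟩ := i
  obtain ⟨j, hj⟩ := j
  simp only [List.get_eq_getElem]
  rw [hLg i hi, hLg j hj, hLlen]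
  rw [hLlen] at hi hj
  rcases le_total i j with h | h
  · exact key i j h hj
  · rw [G.adj_comm, key j i h hi]
    omega

/-- connectivity avoiding a set `S` -/
def Conn {α : Type} (G : SimpleGraph α) (S : Set α) (u v : α) : Prop :=
  ∃ p : G.Walk u v, ∀ x ∈ p.support, x ∉ S

namespace Conn

variable {α : Type} {G : SimpleGraph α} {S : Set α} {u v w : α}

lemma refl (h : u ∉ S) : Conn G S u u := ⟨Walk.nil, by simp [h]⟩

lemma symm (h : Conn G S u v) : Conn G S v u := by
  obtain ⟨p, hp⟩ := h
  exact ⟨p.reverse, by simpa [Walk.support_reverse] using hp⟩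

lemma trans (h1 : Conn G S u v) (h2 : Conn G S v w) : Conn G S u w := by
  obtain ⟨p, hp⟩ := h1
  obtain ⟨q, hq⟩ := h2
  refine ⟨p.append q, ?_⟩
  intro x hx
  rcases (Walk.mem_support_append_iff p q).mp hx with h | h
  · exact hp x h
  · exact hq x h

lemma not_mem_left (h : Conn G S u v) : u ∉ S := by
  obtain ⟨p, hp⟩ := h
  exact hp u p.start_mem_support

lemma not_mem_right (h : Conn G S u v) : v ∉ S := by
  obtain ⟨p, hp⟩ := h
  exact hp v p.end_mem_support

lemma adj_extend (h : Conn G S u v) (ha : G.Adj v w) (hw : w ∉ S) : Conn G S u w := by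
  refine h.trans ⟨ha.toWalk, ?_⟩
  intro x hx
  rw [Walk.support_cons, List.mem_cons] at hx
  rcases hx with rfl | hx
  · exact h.not_mem_right
  · rw [Walk.support_nil, List.mem_singleton] at hx
    subst hx
    exact hw

lemma of_mem_support {p : G.Walk u v} (hp : ∀ x ∈ p.support, x ∉ S) (hz : w ∈ p.support) :
    Conn G S u w := by
  classical
  exact ⟨p.takeUntil w hz, fun x hx => hp x (Walk.support_takeUntil_subset p hz hx)⟩

end Conn

/-- From any walk from `s` to `t` with interior in `C` (where `s ≠ t` and `s,t` non-adjacent),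
extract a chordless path: a nonempty list `l ⊆ C` such that `s :: l ++ [t]` has no duplicate
vertices and consecutive-only adjacency. -/
lemma exists_induced_path {α : Type} {G : SimpleGraph α} {s t : α} (hst : s ≠ t)
    (hadjst : ¬ G.Adj s t) (C : Set α)
    (hW : ∃ W : G.Walk s t, ∀ z ∈ W.support, z = s ∨ z = t ∨ z ∈ C) :
    ∃ l : List α, l ≠ [] ∧ (∀ x ∈ l, x ∈ C) ∧ (s :: l ++ [t]).Nodup ∧
      (∀ i j : ℕ, (hi : i < (s :: l ++ [t]).length) → (hj : j < (s :: l ++ [t]).length) →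
        i < j → (G.Adj ((s :: l ++ [t])[i]'hi) ((s :: l ++ [t])[j]'hj) ↔ i + 1 = j)) := by
  classical
  set Q : G.Walk s t → Prop := fun p => ∀ z ∈ p.support, z = s ∨ z = t ∨ z ∈ C with hQdef
  have hM : ∃ n, ∃ p : G.Walk s t, p.IsPath ∧ Q p ∧ p.length = n := by
    obtain ⟨W, hw⟩ := hW
    exact ⟨W.bypass.length, W.bypass, W.bypass_isPath,
      fun z hz => hw z (W.support_bypass_subset hz), rfl⟩
  obtain ⟨p, hpath, hQp, hplen⟩ := Nat.sInf_mem hM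
  have hmin : ∀ q : G.Walk s t, Q q → p.length ≤ q.length := by
    intro q hq
    have h1 : q.bypass.length ∈ {n | ∃ p : G.Walk s t, p.IsPath ∧ Q p ∧ p.length = n} :=
      ⟨q.bypass, q.bypass_isPath, fun z hz => hq z (q.support_bypass_subset hz), rfl⟩
    calc p.length = sInf {n | ∃ p : G.Walk s t, p.IsPath ∧ Q p ∧ p.length = n} := hplen
    _ ≤ q.bypass.length := Nat.sInf_le h1
    _ ≤ q.length := q.length_bypass_le
  have hnd : p.support.Nodup := hpath.support_nodup
  -- length of takeUntil at an indexed vertex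
  have hidx : ∀ (z : α) (hz : z ∈ p.support) (k : ℕ) (hk : k < p.support.length),
      p.support[k]'hk = z → (p.takeUntil z hz).length = k := by
    intro z hz k hk hzk
    have hsplit : p.support =
        (p.takeUntil z hz).support ++ (p.dropUntil z hz).support.tail := by
      conv_lhs => rw [← p.take_spec hz]
      exact Walk.support_append _ _
    have hlen2 : (p.takeUntil z hz).length + 1 ≤ p.support.length := by
      rw [hsplit]
      simp only [List.length_append, Walk.length_support]
      omega
    have hK1 : 1 ≤ (p.takeUntil z hz).support.length := by
      rw [Walk.length_support]; omega
    have e2 : (p.takeUntil z hz).support[(p.takeUntil z hz).support.length - 1]'(by omega) = z := by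
      rw [← List.getLast_eq_getElem (Walk.support_ne_nil _)]
      exact Walk.getLast_support _
    have e3 : (p.takeUntil z hz).support[(p.takeUntil z hz).support.length - 1]? = some z := by
      rw [List.getElem?_eq_getElem (by omega), e2]
    have e4 : p.support[(p.takeUntil z hz).support.length - 1]? = some z := by
      rw [hsplit, List.getElem?_append_left (by omega)]
      exact e3
    have e5 : p.support[k]? = some z := by
      rw [List.getElem?_eq_getElem hk, hzk]
    have hKlt : (p.takeUntil z hz).support.length - 1 < p.support.length := by
      rw [hsplit, List.length_append]; omega
    have hkK : (p.takeUntil z hz).support.length - 1 = k := by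
      by_contra hne
      rcases Nat.lt_or_ge ((p.takeUntil z hz).support.length - 1) k with hlt | hge
      · exact List.nodup_iff_getElem?_ne_getElem?.mp hnd _ k hlt hk (e4.trans e5.symm)
      · exact List.nodup_iff_getElem?_ne_getElem?.mp hnd k _ (by omega) hKlt (e5.trans e4.symm)
    have := Walk.length_support (p.takeUntil z hz)
    omega
  -- no chords
  have hnochord : ∀ i j : ℕ, (hi : i < p.support.length) → (hj : j < p.support.length) →
      i < j → (G.Adj (p.support[i]'hi) (p.support[j]'hj) ↔ i + 1 = j) := by
    intro i j hi hj hij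
    constructor
    · intro hadj
      by_contra hne
      have hij2 : i + 2 ≤ j := by omega
      have hu : p.support[i]'hi ∈ p.support := List.getElem_mem _
      have hv : p.support[j]'hj ∈ p.support := List.getElem_mem _
      set q : G.Walk s t :=
        (p.takeUntil _ hu).append (Walk.cons hadj (p.dropUntil _ hv)) with hqdef
      have hQq : Q q := by
        intro z hz
        rw [hqdef, Walk.mem_support_append_iff] at hz
        apply hQp
        rcases hz with hz | hz
        · exact Walk.support_takeUntil_subset _ _ hz
        · rw [Walk.support_cons, List.mem_cons] at hz
          rcases hz with rfl | hz
          · exact hu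
          · exact Walk.support_dropUntil_subset _ _ hz
      have hlq : q.length = i + 1 + (p.length - j) := by
        rw [hqdef, Walk.length_append, Walk.length_cons]
        rw [hidx _ hu i hi rfl]
        have hsum : (p.takeUntil _ hv).length + (p.dropUntil _ hv).length = p.length := by
          conv_rhs => rw [← p.take_spec hv]
          exact (Walk.length_append _ _).symm
        rw [hidx _ hv j hj rfl] at hsum
        omega
      have hjp : j ≤ p.length := by
        rw [Walk.length_support] at hj
        omega
      have := hmin q hQq
      omega
    · intro h
      subst h
      have hc := List.isChain_iff_getElem.mp p.isChain_adj_support i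
        (by rw [Walk.length_support] at hj ⊢; omega)
      simpa using hc
  -- shape of the support
  have hlen1 : 2 ≤ p.length := by
    cases p with
    | nil => exact absurd rfl hst
    | cons h q =>
      cases q with
      | nil => exact absurd h hadjst
      | cons h' q' => simp only [Walk.length_cons]; omega
  have hshape : ∃ mid : List α, p.support = s :: mid ++ [t] ∧ mid ≠ [] := by
    have htail : p.support.tail ≠ [] := by
      have := p.length_support
      intro h
      rw [p.support_eq_cons, h] at this
      simp only [List.length_cons, List.length_nil] at this
      omega
    have hlast : p.support.tail.getLast htail = t := by
      rw [List.getLast_tail]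
      exact p.getLast_support
    refine ⟨p.support.tail.dropLast, ?_, ?_⟩
    · conv_lhs => rw [p.support_eq_cons]
      congr 1
      conv_lhs => rw [← List.dropLast_append_getLast htail]
      rw [hlast]
      rfl
    · intro h
      have h2 := congrArg List.length (List.dropLast_append_getLast htail)
      rw [h] at h2
      have h3 := congrArg List.length p.support_eq_cons
      rw [Walk.length_support] at h3
      simp at h2 h3
      omega
  obtain ⟨mid, hmid, hmidne⟩ := hshape
  rw [hmid] at hnd hnochord
  refine ⟨mid, hmidne, ?_, hnd, hnochord⟩
  intro x hx
  have hxs : x ∈ p.support := by rw [hmid]; simp [hx]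
  have hQx := hQp x hxs
  have hx_ne_s : x ≠ s := by
    rintro rfl
    exact (List.nodup_cons.mp hnd).1 (by simp [hx])
  have hx_ne_t : x ≠ t := by
    rintro rfl
    exact (List.disjoint_of_nodup_append (List.Nodup.of_cons hnd)) hx (by simp)
  tauto

lemma Conn.conn_def {α : Type} {G : SimpleGraph α} {S : Set α} {u v : α} :
    Conn G S u v ↔ ∃ p : G.Walk u v, ∀ x ∈ p.support, x ∉ S := Iff.rfl

-- now the real content

lemma IsChordal.induce {α : Type} {G : SimpleGraph α} (hG : IsChordal G) (s : Set α) :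
    IsChordal (G.induce s) := fun n hn =>
  ⟨fun f => (hG n hn).elim' ((SimpleGraph.Embedding.induce s).comp f)⟩

lemma sep_full {α : Type} {G : SimpleGraph α} {a b : α} (hab : a ≠ b) (hadj : ¬ G.Adj a b) :
    ¬ Conn G ({a, b}ᶜ : Set α) a b := by
  rw [Conn.conn_def]
  rintro ⟨p, hp⟩
  cases p with
  | nil => exact hab rfl
  | cons h q =>
    rename_i c
    have hc : c ∈ (Walk.cons h q).support := by
      rw [Walk.support_cons]
      exact List.mem_cons_of_mem _ q.start_mem_support
    have h2 := hp c hc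
    simp only [Set.mem_compl_iff, not_not, Set.mem_insert_iff, Set.mem_singleton_iff] at h2
    rcases h2 with rfl | rfl
    · exact h.ne rfl
    · exact hadj h

/-- a minimum separator: `s` has a neighbor in the component of `a`. -/
lemma min_sep_neighbor {α : Type} [Fintype α] {G : SimpleGraph α} {a b : α} {S : Set α}
    (hsub : S ⊆ ({a, b} : Set α)ᶜ) (hS : ¬ Conn G S a b)
    (hmin : ∀ S' : Set α, S' ⊆ ({a, b} : Set α)ᶜ → ¬ Conn G S' a b → S.ncard ≤ S'.ncard)
    {s : α} (hs : s ∈ S) : ∃ x, Conn G S a x ∧ G.Adj x s := by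
  classical
  have hcard : (S \ {s}).ncard < S.ncard := by
    apply Set.ncard_lt_ncard _ S.toFinite
    constructor
    · exact Set.diff_subset
    · intro hsub2
      exact (hsub2 hs).2 rfl
  have hconn : Conn G (S \ {s}) a b := by
    by_contra hc
    have := hmin (S \ {s}) (fun x hx => hsub hx.1) hc
    omega
  rw [Conn.conn_def] at hconn
  obtain ⟨p, hp⟩ := hconn
  have hsmem : s ∈ p.support := by
    by_contra hns
    apply hS
    rw [Conn.conn_def]
    refine ⟨p, fun x hx hxS => ?_⟩
    rcases eq_or_ne x s with rfl | hne
    · exact hns hx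
    · exact hp x hx ⟨hxS, hne⟩
  set q := p.takeUntil s hsmem with hq
  have hcount : q.support.count s = 1 := p.count_support_takeUntil_eq_one hsmem
  have hqsup : ∀ x ∈ q.support, x ∉ S \ {s} :=
    fun x hx => hp x (Walk.support_takeUntil_subset p hsmem hx)
  obtain ⟨x, h, r, hqr⟩ : ∃ (x : α) (h : G.Adj s x) (r : G.Walk x a),
      q.reverse = Walk.cons h r := by
    cases hq' : q.reverse with
    | nil =>
      exfalso
      have : a ∉ S := fun h => (hsub h) (Or.inl rfl)
      exact this hs
    | cons h r => exact ⟨_, h, r, rfl⟩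
  have hrsup : ∀ z ∈ r.support, z ∈ q.support := by
    intro z hz
    have : z ∈ q.reverse.support := by
      rw [hqr, Walk.support_cons]
      exact List.mem_cons_of_mem _ hz
    rw [Walk.support_reverse, List.mem_reverse] at this
    exact this
  have hsnr : s ∉ r.support := by
    intro hsr
    have h2 : q.reverse.support.count s = 1 := by
      rw [Walk.support_reverse, List.count_reverse]
      exact hcount
    rw [hqr, Walk.support_cons, List.count_cons_self] at h2
    have h3 : 0 < r.support.count s := List.count_pos_iff.mpr hsr
    omega
  refine ⟨x, ?_, h.symm⟩
  have : Conn G S x a := by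
    rw [Conn.conn_def]
    refine ⟨r, fun z hz hzS => ?_⟩
    rcases eq_or_ne z s with rfl | hne
    · exact hsnr hz
    · exact hqsup z (hrsup z hz) ⟨hzS, hne⟩
  exact this.symm

/-- a minimum separator is a clique -/
lemma min_sep_clique {α : Type} [Fintype α] {G : SimpleGraph α} (hG : IsChordal G) {a b : α}
    (hab : a ≠ b) (hadj : ¬ G.Adj a b)
    {S : Set α} (hsub : S ⊆ ({a, b} : Set α)ᶜ) (hS : ¬ Conn G S a b)
    (hmin : ∀ S' : Set α, S' ⊆ ({a, b} : Set α)ᶜ → ¬ Conn G S' a b → S.ncard ≤ S'.ncard)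
    {s t : α} (hsS : s ∈ S) (htS : t ∈ S) (hst : s ≠ t) : G.Adj s t := by
  classical
  by_contra hadjst
  have haS : a ∉ S := fun h => (hsub h) (Or.inl rfl)
  have hbS : b ∉ S := fun h => (hsub h) (Or.inr rfl)
  have hSb : ¬ Conn G S b a := fun h => hS h.symm
  -- sides
  have hside : ∀ c d : α, S ⊆ ({c, d} : Set α)ᶜ → ¬ Conn G S c d →
      (∀ S' : Set α, S' ⊆ ({c, d} : Set α)ᶜ → ¬ Conn G S' c d → S.ncard ≤ S'.ncard) →
      ∃ l : List α, l ≠ [] ∧ (∀ x ∈ l, Conn G S c x) ∧ (s :: l ++ [t]).Nodup ∧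
      (∀ i j : ℕ, (hi : i < (s :: l ++ [t]).length) → (hj : j < (s :: l ++ [t]).length) →
        i < j → (G.Adj ((s :: l ++ [t])[i]'hi) ((s :: l ++ [t])[j]'hj) ↔ i + 1 = j)) := by
    intro c d hsubc hSc hminc
    obtain ⟨xs, hxsc, hxsadj⟩ := min_sep_neighbor hsubc hSc hminc hsS
    obtain ⟨xt, hxtc, hxtadj⟩ := min_sep_neighbor hsubc hSc hminc htS
    obtain ⟨w, hw⟩ := Conn.conn_def.mp (hxsc.symm.trans hxtc)
    refine exists_induced_path hst hadjst {x | Conn G S c x} ?_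
    refine ⟨Walk.cons hxsadj.symm (w.append (Walk.cons hxtadj Walk.nil)), ?_⟩
    intro z hz
    rw [Walk.support_cons, List.mem_cons] at hz
    rcases hz with rfl | hz
    · exact Or.inl rfl
    rw [Walk.mem_support_append_iff] at hz
    rcases hz with hz | hz
    · exact Or.inr (Or.inr (hxsc.trans (Conn.of_mem_support hw hz)))
    · rw [Walk.support_cons, List.mem_cons] at hz
      rcases hz with rfl | hz
      · exact Or.inr (Or.inr hxtc)
      · rw [Walk.support_nil, List.mem_singleton] at hz
        subst hz
        exact Or.inr (Or.inl rfl)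
  obtain ⟨la, hla_ne, hla_conn, hla_nd, hla_adj⟩ := hside a b hsub hS hmin
  obtain ⟨lb, hlb_ne, hlb_conn, hlb_nd, hlb_adj⟩ := hside b a
    (by rw [Set.pair_comm b a]; exact hsub)
    (fun h => hS h.symm)
    (fun S' h1 h2 => hmin S' (by rw [Set.pair_comm a b]; exact h1) (fun h => h2 h.symm))
  refine two_paths_false hG s t la lb hla_ne hlb_ne hla_adj hlb_adj hla_nd hlb_nd ?_
  intro x hx y hy
  have hcx := hla_conn x hx
  have hcy := hlb_conn y hy
  constructor
  · intro hadjxy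
    have hyS : y ∉ S := hcy.not_mem_right
    exact hS ((hcx.adj_extend hadjxy hyS).trans hcy.symm)
  · rintro rfl
    exact hS (hcx.trans hcy.symm)

theorem dirac_strong : ∀ (n : ℕ) {α : Type} [Fintype α] (G : SimpleGraph α), IsChordal G →
    Fintype.card α = n →
    (∀ x y : α, x ≠ y → G.Adj x y) ∨
      (∃ x y : α, x ≠ y ∧ ¬ G.Adj x y ∧ G.IsClique (G.neighborSet x) ∧
        G.IsClique (G.neighborSet y)) := by
  intro n
  induction n using Nat.strong_induction_on with
  | _ n ih =>
  intro α _ G hG hcard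
  classical
  by_cases hcomp : ∀ x y : α, x ≠ y → G.Adj x y
  · exact Or.inl hcomp
  push_neg at hcomp
  obtain ⟨a, b, hab, hadj⟩ := hcomp
  -- minimum separator
  set M : Set ℕ := {m | ∃ S : Set α, S ⊆ ({a, b} : Set α)ᶜ ∧ ¬ Conn G S a b ∧ S.ncard = m}
    with hM
  have hMne : M.Nonempty := ⟨_, ({a, b} : Set α)ᶜ, le_refl _, sep_full hab hadj, rfl⟩
  obtain ⟨S, hsub, hS, hScard⟩ := Nat.sInf_mem hMne
  have hmin : ∀ S' : Set α, S' ⊆ ({a, b} : Set α)ᶜ → ¬ Conn G S' a b →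
      S.ncard ≤ S'.ncard := by
    intro S' h1 h2
    rw [hScard]
    exact Nat.sInf_le ⟨S', h1, h2, rfl⟩
  have haS : a ∉ S := fun h => (hsub h) (Or.inl rfl)
  have hbS : b ∉ S := fun h => (hsub h) (Or.inr rfl)
  have hclique : ∀ x ∈ S, ∀ y ∈ S, x ≠ y → G.Adj x y :=
    fun x hx y hy hxy => min_sep_clique hG hab hadj hsub hS hmin hx hy hxy
  -- one simplicial vertex in each side
  have hside : ∀ c d : α, c ∉ S → d ∉ S → ¬ Conn G S c d →
      ∃ w, Conn G S c w ∧ G.IsClique (G.neighborSet w) := by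
    intro c d hcS hdS hccd
    set U : Set α := {x | Conn G S c x} ∪ S with hU
    have hcC : Conn G S c c := Conn.refl hcS
    have hdU : d ∉ U := by
      intro hd
      rcases hd with hd | hd
      · exact hccd hd
      · exact hdS hd
    haveI : DecidablePred (· ∈ U) := Classical.decPred _
    have hNU : ∀ x, Conn G S c x → G.neighborSet x ⊆ U := by
      intro x hx y hy
      by_cases hyS : y ∈ S
      · exact Or.inr hyS
      · exact Or.inl (hx.adj_extend hy hyS)
    have hcardU : Fintype.card U < n := by
      rw [← hcard]
      refine Fintype.card_lt_of_injective_of_notMem Subtype.val Subtype.val_injective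
        (b := d) ?_
      rintro ⟨⟨z, hz⟩, hzd⟩
      exact hdU (hzd ▸ hz)
    rcases ih _ hcardU (G.induce U) (hG.induce U) rfl with hcomp' | ⟨x, y, hxy, hnadj, hsx, hsy⟩
    · refine ⟨c, hcC, ?_⟩
      intro u hu v hv huv
      have huU : u ∈ U := hNU c hcC hu
      have hvU : v ∈ U := hNU c hcC hv
      exact hcomp' ⟨u, huU⟩ ⟨v, hvU⟩ (fun h => huv (congrArg Subtype.val h))
    · have hnboth : ¬ ((x : α) ∈ S ∧ (y : α) ∈ S) := by
        rintro ⟨hx1, hy1⟩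
        exact hnadj (hclique ↑x hx1 ↑y hy1 (fun h => hxy (Subtype.ext h)))
      have hpick : ∃ w : U, Conn G S c ↑w ∧
          (G.induce U).IsClique ((G.induce U).neighborSet w) := by
        rcases (x.2 : (x : α) ∈ U) with hx2 | hx2
        · exact ⟨x, hx2, hsx⟩
        · rcases (y.2 : (y : α) ∈ U) with hy2 | hy2
          · exact ⟨y, hy2, hsy⟩
          · exact absurd ⟨hx2, hy2⟩ hnboth
      obtain ⟨w, hwc, hws⟩ := hpick
      refine ⟨↑w, hwc, ?_⟩
      intro u hu v hv huv
      have huU : u ∈ U := hNU ↑w hwc hu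
      have hvU : v ∈ U := hNU ↑w hwc hv
      have h1 : (⟨u, huU⟩ : U) ∈ (G.induce U).neighborSet w := hu
      have h2 : (⟨v, hvU⟩ : U) ∈ (G.induce U).neighborSet w := hv
      exact hws h1 h2 (fun h => huv (congrArg Subtype.val h))
  obtain ⟨wa, hwa_conn, hwa_simp⟩ := hside a b haS hbS hS
  obtain ⟨wb, hwb_conn, hwb_simp⟩ := hside b a hbS haS (fun h => hS h.symm)
  refine Or.inr ⟨wa, wb, ?_, ?_, hwa_simp, hwb_simp⟩
  · rintro rfl
    exact hS (hwa_conn.trans hwb_conn.symm)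
  · intro h
    exact hS ((hwa_conn.adj_extend h hwb_conn.not_mem_right).trans hwb_conn.symm)

lemma dirac_simplicial {α : Type} [Fintype α] (G : SimpleGraph α) (hG : IsChordal G)
    (hne : Nonempty α) : ∃ v : α, G.IsClique (G.neighborSet v) := by
  rcases dirac_strong (Fintype.card α) G hG rfl with hcomp | ⟨x, _, _, _, hx, _⟩
  · obtain ⟨v⟩ := hne
    refine ⟨v, ?_⟩
    intro u hu w hw huw
    exact hcomp u w huw
  · exact ⟨x, hx⟩


theorem aux_main : ∀ (n : ℕ) {α : Type} [Fintype α] (G : SimpleGraph α),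
    Fintype.card α = n → IsChordal G → ∀ A B : Set α, A ∪ B = Set.univ → Disjoint A B →
    (∀ u ∈ B, ∀ v ∈ B, ¬ G.Adj u v) →
    (∀ v ∈ B, ¬ G.IsClique (G.neighborSet v)) →
    A.Nonempty → B.ncard < A.ncard := by
  intro n
  induction n using Nat.strong_induction_on with
  | _ n ih =>
  intro α _ G hcard hG A B hcover hdisj hBindep hBnotsimp hA
  classical
  have hmem : ∀ x : α, x ∈ A ∨ x ∈ B := fun x => by
    rw [← Set.mem_union, hcover]; trivial
  have hApos : 0 < A.ncard := (Set.ncard_pos A.toFinite).mpr hA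
  rcases Set.eq_empty_or_nonempty B with rfl | hB
  · simpa using hApos
  obtain ⟨b0, hb0⟩ := hB
  have hNA : ∀ x ∈ B, G.neighborSet x ⊆ A := by
    intro x hx y hy
    rcases hmem y with h | h
    · exact h
    · exact absurd hy (hBindep x hx y h)
  haveI : Nonempty α := ⟨b0⟩
  obtain ⟨v, hv⟩ := dirac_simplicial G hG ‹Nonempty α›
  have hvB : v ∉ B := fun h => hBnotsimp v h hv
  have hvA : v ∈ A := (hmem v).resolve_right hvB
  set D : Set α := {x | x ∈ B ∧ G.IsClique (G.neighborSet x \ {v})} with hD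
  have hDB : D ⊆ B := fun x hx => hx.1
  have hD_Nv : D ⊆ G.neighborSet v := by
    intro x hx
    by_contra hxv
    apply hBnotsimp x hx.1
    have heq : G.neighborSet x \ {v} = G.neighborSet x := by
      ext z
      simp only [Set.mem_diff, Set.mem_singleton_iff, and_iff_left_iff_imp]
      rintro hz rfl
      exact hxv hz.symm
    rw [← heq]
    exact hx.2
  have hDsub : D.Subsingleton := by
    intro x hx y hy
    by_contra hxy
    exact hBindep x (hDB hx) y (hDB hy) (hv (hD_Nv hx) (hD_Nv hy) hxy)
  set s : Set α := Set.univ \ ({v} ∪ D) with hs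
  have hmem_s : ∀ x : α, x ∈ s ↔ (x ≠ v ∧ x ∉ D) := by
    intro x
    rw [hs]
    simp [not_or]
  have hAs : ∀ x ∈ A, x ≠ v → x ∈ s := by
    intro x hxA hxv
    rw [hmem_s]
    exact ⟨hxv, fun hd => (Set.disjoint_left.mp hdisj hxA) (hDB hd)⟩
  -- the induced graph
  haveI : DecidablePred (· ∈ s) := Classical.decPred _
  have hcards : Fintype.card s < n := by
    rw [← hcard]
    refine Fintype.card_lt_of_injective_of_notMem Subtype.val Subtype.val_injective
      (b := v) ?_
    rintro ⟨⟨z, hz⟩, hzd⟩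
    rw [hmem_s] at hz
    exact hz.1 hzd
  set A' : Set ↥s := {x | ↑x ∈ A} with hA'
  set B' : Set ↥s := {x | ↑x ∈ B} with hB'
  have hih := ih _ hcards (G.induce s) rfl (IsChordal.induce hG s) A' B' ?_ ?_ ?_ ?_ ?_
  · -- transfer cardinalities
    have himA : Subtype.val '' A' = A \ {v} := by
      ext x
      constructor
      · rintro ⟨⟨y, hy⟩, hyA, rfl⟩
        refine ⟨hyA, ?_⟩
        rw [hmem_s] at hy
        simpa using hy.1
      · rintro ⟨hxA, hxv⟩
        rw [Set.mem_singleton_iff] at hxv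
        exact ⟨⟨x, hAs x hxA hxv⟩, hxA, rfl⟩
    have himB : Subtype.val '' B' = B \ D := by
      ext x
      constructor
      · rintro ⟨⟨y, hy⟩, hyB, rfl⟩
        refine ⟨hyB, ?_⟩
        rw [hmem_s] at hy
        exact hy.2
      · rintro ⟨hxB, hxD⟩
        have hxs : x ∈ s := by
          rw [hmem_s]
          exact ⟨fun h => hvB (h ▸ hxB), hxD⟩
        exact ⟨⟨x, hxs⟩, hxB, rfl⟩
    have e1 : A'.ncard = (A \ {v}).ncard := by
      rw [← himA, Set.ncard_image_of_injective A' Subtype.val_injective]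
    have e2 : B'.ncard = (B \ D).ncard := by
      rw [← himB, Set.ncard_image_of_injective B' Subtype.val_injective]
    have e3 : (A \ {v}).ncard = A.ncard - 1 := Set.ncard_diff_singleton_of_mem hvA
    have e4 : (B \ D).ncard = B.ncard - D.ncard := Set.ncard_diff hDB D.toFinite
    have e5 : D.ncard ≤ 1 := (Set.ncard_le_one D.toFinite).mpr fun a ha b hb => hDsub ha hb
    have e6 : D.ncard ≤ B.ncard := Set.ncard_le_ncard hDB B.toFinite
    omega
  · -- cover
    rw [Set.eq_univ_iff_forall]
    intro x
    rcases hmem ↑x with h | h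
    · exact Or.inl h
    · exact Or.inr h
  · -- disjoint
    rw [Set.disjoint_left]
    intro x hxA hxB
    exact Set.disjoint_left.mp hdisj hxA hxB
  · -- independent
    intro u hu w hw hadj
    exact hBindep ↑u hu ↑w hw hadj
  · -- non-simplicial
    intro b hb hclique
    have hbB : (b : α) ∈ B := hb
    have hbD : (b : α) ∉ D := by
      have := b.2
      rw [hmem_s] at this
      exact this.2
    apply hbD
    refine ⟨hbB, ?_⟩
    intro u hu w hw huw
    have huA : u ∈ A := hNA ↑b hbB hu.1
    have hwA : w ∈ A := hNA ↑b hbB hw.1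
    have hus : u ∈ s := hAs u huA (by simpa using hu.2)
    have hws : w ∈ s := hAs w hwA (by simpa using hw.2)
    have h1 : (⟨u, hus⟩ : ↥s) ∈ (G.induce s).neighborSet b := hu.1
    have h2 : (⟨w, hws⟩ : ↥s) ∈ (G.induce s).neighborSet b := hw.1
    exact hclique h1 h2 (fun h => huw (congrArg Subtype.val h))
  · -- A' nonempty
    have hnclique := hBnotsimp b0 hb0
    have : ∃ u ∈ G.neighborSet b0, ∃ w ∈ G.neighborSet b0, u ≠ w ∧ ¬ G.Adj u w := by
      by_contra hcon
      push_neg at hcon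
      exact hnclique fun u hu w hw huw => hcon u hu w hw huw
    obtain ⟨u, hu, w, hw, huw, _⟩ := this
    have huA : u ∈ A := hNA b0 hb0 hu
    have hwA : w ∈ A := hNA b0 hb0 hw
    rcases eq_or_ne u v with rfl | hune
    · exact ⟨⟨w, hAs w hwA (fun h => huw h.symm)⟩, hwA⟩
    · exact ⟨⟨u, hAs u huA hune⟩, huA⟩


/-- If `G` is a chordal graph whose vertex set is partitioned into `A` and `B` such that
`B` is an independent set and no vertex of `B` is simplicial in `G` (and `A` is nonempty),
then `|B| < |A|`. -/
theorem nonsimplicial_independent_lt {α : Type} [Fintype α] (G : SimpleGraph α)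
    (hG : IsChordal G) (A B : Set α)
    (hcover : A ∪ B = Set.univ) (hdisj : Disjoint A B)
    (hBindep : ∀ u ∈ B, ∀ v ∈ B, ¬ G.Adj u v)
    (hBnotsimplicial : ∀ v ∈ B, ¬ G.IsClique (G.neighborSet v))
    (hA : A.Nonempty) :
    B.ncard < A.ncard :=
  aux_main (Fintype.card α) G rfl hG A B hcover hdisj hBindep hBnotsimplicial hA
end

section
/- If a graph G contains a vertex v with two nonadjacent neighbors u1, u2 ∈ N_G(v), together with a walk from u1 to u2 all of whose internal vertices lie outside the closed neighborhood N_G[v], then G contains a hole (an induced cycle of length at least four) passing through v. -/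
namespace SimpleGraph.Walk
variable {V : Type} {G : SimpleGraph V}

lemma getVert_drop'' {u v : V} (p : G.Walk u v) (n i : ℕ) :
    (p.drop n).getVert i = p.getVert (n + i) := by
  induction p generalizing n with
  | nil => cases n <;> rfl
  | cons h q ih =>
    cases n with
    | zero => simp [drop]
    | succ n =>
      show ((q.drop n).copy (getVert_cons_succ _ h).symm rfl).getVert i = _
      rw [getVert_copy, ih, Nat.add_right_comm, getVert_cons_succ]

lemma length_drop'' {u v : V} (p : G.Walk u v) (n : ℕ) :
    (p.drop n).length = p.length - n := by
  induction p generalizing n with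
  | nil => cases n <;> simp [drop]
  | cons h q ih =>
    cases n with
    | zero => simp [drop]
    | succ n =>
      show ((q.drop n).copy (getVert_cons_succ _ h).symm rfl).length = _
      rw [length_copy, ih, length_cons]
      omega

lemma support_drop_subset'' {u v x : V} (p : G.Walk u v) (n : ℕ)
    (hx : x ∈ (p.drop n).support) : x ∈ p.support := by
  rw [mem_support_iff_exists_getVert] at hx ⊢
  obtain ⟨i, hx, hi⟩ := hx
  rw [getVert_drop''] at hx
  refine ⟨min (n + i) p.length, ?_, Nat.min_le_right _ _⟩
  rcases le_or_gt (n + i) p.length with h | h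
  · rwa [Nat.min_eq_left h]
  · rw [Nat.min_eq_right h.le, getVert_length, ← hx,
      getVert_of_length_le _ h.le]

/-- take -/
def take' {u v : V} : (p : G.Walk u v) → (n : ℕ) → G.Walk u (p.getVert n)
  | .nil, _ => .nil
  | .cons h q, 0 => (Walk.nil' u).copy rfl (getVert_zero (.cons h q)).symm
  | .cons h q, (n+1) => (cons h (take' q n)).copy rfl (getVert_cons_succ _ h).symm

lemma getVert_take' {u v : V} (p : G.Walk u v) (n i : ℕ) (hin : i ≤ n) :
    (p.take' n).getVert i = p.getVert i := by
  induction p generalizing n i with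
  | nil => cases n <;> rfl
  | cons h q ih =>
    cases n with
    | zero =>
      interval_cases i
      simp [take']
    | succ n =>
      show ((cons h (take' q n)).copy rfl _).getVert i = _
      rw [getVert_copy]
      cases i with
      | zero => simp
      | succ i => rw [getVert_cons_succ, getVert_cons_succ, ih _ _ (by omega)]

lemma length_take' {u v : V} (p : G.Walk u v) (n : ℕ) :
    (p.take' n).length = min n p.length := by
  induction p generalizing n with
  | nil => cases n <;> simp [take']
  | cons h q ih =>
    cases n with
    | zero => simp [take']
    | succ n =>
      show ((cons h (take' q n)).copy rfl _).length = _
      rw [length_copy, length_cons, ih, length_cons]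
      omega

lemma support_take_subset' {u v x : V} (p : G.Walk u v) (n : ℕ)
    (hx : x ∈ (p.take' n).support) : x ∈ p.support := by
  rw [mem_support_iff_exists_getVert] at hx ⊢
  obtain ⟨i, hx, hi⟩ := hx
  rw [length_take'] at hi
  rw [getVert_take' _ _ _ (le_trans hi (Nat.min_le_left _ _))] at hx
  exact ⟨i, hx, le_trans hi (Nat.min_le_right _ _)⟩

lemma shortcut' {u₁ u₂ : V} (p : G.Walk u₁ u₂) {i j : ℕ} (hij : i ≤ j) (hj : j ≤ p.length)
    (q : G.Walk (p.getVert i) (p.getVert j)) :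
    ∃ p' : G.Walk u₁ u₂, p'.length = i + q.length + (p.length - j) ∧
      ∀ x ∈ p'.support, x ∈ p.support ∨ x ∈ q.support := by
  refine ⟨(p.take' i).append (q.append (p.drop j)), ?_, ?_⟩
  · rw [length_append, length_append, length_take', length_drop'']
    omega
  · intro x hx
    rw [mem_support_append_iff, mem_support_append_iff] at hx
    rcases hx with hx | hx | hx
    · exact Or.inl (support_take_subset' _ _ hx)
    · exact Or.inr hx
    · exact Or.inl (support_drop_subset'' _ _ hx)

end SimpleGraph.Walk

open SimpleGraph Walk in
lemma fin_eq_add_one_iff' {m : ℕ} (x y : Fin (m+2)) :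
    x = y + 1 ↔ (y.val + 1 = x.val ∨ (y.val = m+1 ∧ x.val = 0)) := by
  rw [Fin.ext_iff, Fin.val_add_one]
  split_ifs with h
  · have : y.val = m+1 := by rw [h]; rfl
    omega
  · have : y.val ≠ m+1 := fun hc => h (Fin.ext (by simpa using hc))
    omega

lemma cyc_adj_iff' {m : ℕ} (a b : Fin (m+2)) :
    (SimpleGraph.cycleGraph (m+2)).Adj a b ↔
      (a.val + 1 = b.val ∨ b.val + 1 = a.val ∨ (a.val = 0 ∧ b.val = m+1) ∨
        (b.val = 0 ∧ a.val = m+1)) := by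
  rw [SimpleGraph.cycleGraph_adj, sub_eq_iff_eq_add, sub_eq_iff_eq_add,
    add_comm (1 : Fin (m+2)) b, add_comm (1 : Fin (m+2)) a,
    fin_eq_add_one_iff', fin_eq_add_one_iff']
  omega

open SimpleGraph Walk

/-- If a graph `G` contains a vertex `v` with two distinct nonadjacent neighbors
`u₁, u₂ ∈ N_G(v)`, together with a walk from `u₁` to `u₂` all of whose internal vertices
lie outside the closed neighborhood `N_G[v]`, then `G` contains a hole (an induced cycle
of length at least four, i.e. an embedded `n`-cycle with `n ≥ 4`) passing through `v`. -/
theorem hole_through_vertex_of_walk {α : Type} (G : SimpleGraph α) (v u₁ u₂ : α)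
    (h₁ : G.Adj v u₁) (h₂ : G.Adj v u₂) (hne : u₁ ≠ u₂) (hnadj : ¬ G.Adj u₁ u₂)
    (w : G.Walk u₁ u₂)
    (hint : ∀ x ∈ w.support, x ≠ u₁ → x ≠ u₂ → x ∉ insert v (G.neighborSet v)) :
    ∃ (n : ℕ) (_ : 4 ≤ n) (f : SimpleGraph.cycleGraph n ↪g G) (i : Fin n), f i = v := by
  classical
  obtain ⟨L, hLS, hmin⟩ := Nat.lt_wfRel.wf.has_min
    {n | ∃ p : G.Walk u₁ u₂,
      (∀ x ∈ p.support, x ≠ u₁ → x ≠ u₂ → x ∉ insert v (G.neighborSet v)) ∧ p.length = n}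
    ⟨w.length, w, hint, rfl⟩
  obtain ⟨p, hp, hL⟩ := hLS
  have hmin' : ∀ q : G.Walk u₁ u₂,
      (∀ x ∈ q.support, x ≠ u₁ → x ≠ u₂ → x ∉ insert v (G.neighborSet v)) →
      ¬ q.length < p.length := fun q hq h => hmin q.length ⟨q, hq, rfl⟩ (hL ▸ h)
  have hmem : ∀ k, k ≤ p.length → p.getVert k ∈ p.support :=
    fun k hk => Walk.mem_support_iff_exists_getVert.mpr ⟨k, rfl, hk⟩
  have key : ∀ (i j : ℕ), i ≤ j → j ≤ p.length →
      ∀ q : G.Walk (p.getVert i) (p.getVert j), (∀ x ∈ q.support, x ∈ p.support) →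
      p.length ≤ i + q.length + (p.length - j) := by
    intro i j hij hj q hq
    obtain ⟨p', hl, hsub⟩ := p.shortcut' hij hj q
    by_contra hc
    refine hmin' p' ?_ (by omega)
    intro x hx hx1 hx2
    rcases hsub x hx with h | h
    · exact hp x h hx1 hx2
    · exact hp x (hq x h) hx1 hx2
  -- injектivity of getVert
  have hinj0 : ∀ i j, i ≤ j → j ≤ p.length → p.getVert i = p.getVert j → i = j := by
    intro i j hij hj heq
    have := key i j hij hj ((Walk.nil' (p.getVert i)).copy rfl heq) ?_
    · simp only [Walk.length_copy, Walk.length_nil] at this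
      omega
    · intro x hx
      simp only [Walk.support_copy, Walk.support_nil, List.mem_singleton] at hx
      exact hx ▸ hmem i (le_trans hij hj)
  have hinj : ∀ i j, i ≤ p.length → j ≤ p.length → p.getVert i = p.getVert j → i = j := by
    intro i j hi hj heq
    rcases le_total i j with h | h
    · exact hinj0 i j h hj heq
    · exact (hinj0 j i h hi heq.symm).symm
  -- no chords
  have hchord : ∀ i j, i + 1 < j → j ≤ p.length → ¬ G.Adj (p.getVert i) (p.getVert j) := by
    intro i j hij hj hadj
    have := key i j (by omega) hj (Walk.cons hadj Walk.nil) ?_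
    · simp only [Walk.length_cons, Walk.length_nil] at this
      omega
    · intro x hx
      simp only [Walk.support_cons, Walk.support_nil, List.mem_cons, List.mem_singleton,
        List.not_mem_nil, or_false] at hx
      rcases hx with h | h
      · exact h ▸ hmem i (by omega)
      · exact h ▸ hmem j hj
  have hvs : v ∉ p.support := fun h => (hp v h h₁.ne h₂.ne) (Set.mem_insert v _)
  have hlen2 : 2 ≤ p.length := by
    by_contra h
    push_neg at h
    have h0 : p.getVert p.length = u₂ := p.getVert_length
    have h1 : p.length = 0 ∨ p.length = 1 := by omega
    rcases h1 with h1 | h1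
    · rw [h1, p.getVert_zero] at h0
      exact hne h0
    · have h2 := p.adj_getVert_succ (i := 0) (by omega)
      rw [p.getVert_zero, show (0 + 1 : ℕ) = p.length from by omega, h0] at h2
      exact hnadj h2
  have hgetadj : ∀ k, k ≤ p.length → (G.Adj v (p.getVert k) ↔ k = 0 ∨ k = p.length) := by
    intro k hk
    constructor
    · intro hadj
      by_contra hc
      push_neg at hc
      refine hp (p.getVert k) (hmem k hk) ?_ ?_ (Set.mem_insert_of_mem _ hadj)
      · intro he
        exact hc.1 (hinj k 0 hk (by omega) (by rw [he, p.getVert_zero]))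
      · intro he
        exact hc.2 (hinj k p.length hk le_rfl (by rw [he, p.getVert_length]))
    · rintro (rfl | rfl)
      · rwa [p.getVert_zero]
      · rwa [p.getVert_length]
  have hadjiff : ∀ i j, i ≤ p.length → j ≤ p.length →
      (G.Adj (p.getVert i) (p.getVert j) ↔ i + 1 = j ∨ j + 1 = i) := by
    intro i j hi hj
    constructor
    · intro hadj
      rcases lt_trichotomy i j with h | h | h
      · left
        by_contra hc
        exact hchord i j (by omega) hj hadj
      · exact absurd (hinj i j hi hj (h ▸ rfl)) (G.ne_of_adj hadj ∘ fun he => by rw [h])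
      · right
        by_contra hc
        exact hchord j i (by omega) hi hadj.symm
    · rintro (rfl | rfl)
      · exact p.adj_getVert_succ (by omega)
      · exact (p.adj_getVert_succ (by omega)).symm
  set L := p.length with hLdef
  set f : Fin (L + 2) → α := fun a => if a.val = 0 then v else p.getVert (a.val - 1) with hf
  have hfval : ∀ a : Fin (L + 2), a.val ≠ 0 → f a = p.getVert (a.val - 1) := by
    intro a ha; simp only [hf]; exact if_neg ha
  have hfval0 : ∀ a : Fin (L + 2), a.val = 0 → f a = v := by
    intro a ha; simp only [hf]; exact if_pos ha
  have hfinj : Function.Injective f := by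
    intro a b hab
    by_cases hA : a.val = 0 <;> by_cases hB : b.val = 0
    · exact Fin.ext (by omega)
    · rw [hfval0 a hA, hfval b hB] at hab
      exact absurd (hab ▸ hmem (b.val - 1) (by omega)) hvs
    · rw [hfval a hA, hfval0 b hB] at hab
      exact absurd (hab ▸ hmem (a.val - 1) (by omega)) hvs
    · rw [hfval a hA, hfval b hB] at hab
      have := hinj _ _ (show a.val - 1 ≤ L by omega) (show b.val - 1 ≤ L by omega) hab
      exact Fin.ext (by omega)
  have hmap : ∀ a b : Fin (L + 2), G.Adj (f a) (f b) ↔ (cycleGraph (L + 2)).Adj a b := by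
    intro a b
    rw [cyc_adj_iff']
    have ha2 : a.val < L + 2 := a.isLt
    have hb2 : b.val < L + 2 := b.isLt
    by_cases hA : a.val = 0 <;> by_cases hB : b.val = 0
    · rw [hfval0 a hA, hfval0 b hB]
      constructor
      · exact fun h => absurd h (G.irrefl)
      · omega
    · rw [hfval0 a hA, hfval b hB, hgetadj _ (by omega)]
      omega
    · rw [hfval a hA, hfval0 b hB, G.adj_comm, hgetadj _ (by omega)]
      omega
    · rw [hfval a hA, hfval b hB, hadjiff _ _ (by omega) (by omega)]
      omega
  exact ⟨L + 2, by omega, ⟨⟨f, hfinj⟩, fun {a b} => hmap a b⟩, ⟨0, by omega⟩, by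
    show f ⟨0, by omega⟩ = v
    exact hfval0 _ rfl⟩
end

section
/- Let G be a graph, let (A,X,B) be a tri-separation of G, and let u, v ∈ B with uv ∈ E(G). Then G is chordal if and only if all three of the following graphs are chordal: G[A ∪ X], G[B ∪ X], and the graph G/uv obtained from G by contracting the edge uv. -/
/-- The graph `G / uv` obtained by contracting the edge `uv`: the vertex `v` is removed
and `u` becomes the merged vertex, adjacent to every former neighbor of `u` or of `v`. -/
def contractEdge {α : Type} (G : SimpleGraph α) (u v : α) :
    SimpleGraph {x : α // x ≠ v} where
  Adj x y := x ≠ y ∧ (G.Adj x.1 y.1 ∨ (x.1 = u ∧ G.Adj v y.1) ∨ (y.1 = u ∧ G.Adj x.1 v))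
  symm := by
    constructor
    rintro x y ⟨hxy, h⟩
    refine ⟨hxy.symm, ?_⟩
    rcases h with h | ⟨h1, h2⟩ | ⟨h1, h2⟩
    · exact Or.inl h.symm
    · exact Or.inr (Or.inr ⟨h1, h2.symm⟩)
    · exact Or.inr (Or.inl ⟨h1, h2.symm⟩)
  loopless := by
    constructor
    rintro x ⟨hxx, -⟩
    exact hxx rfl

open SimpleGraph

variable {α β : Type}

/-- Concrete data of an induced cycle of length `n`. -/
def CycOn (G : SimpleGraph α) (n : ℕ) [NeZero n] (f : Fin n → α) : Prop :=
  Function.Injective f ∧ (∀ i, G.Adj (f i) (f (i + 1))) ∧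
    (∀ i j, G.Adj (f i) (f j) → j = i + 1 ∨ i = j + 1)

open Fin.CommRing in
lemma cycleGraph_adj_iff {n : ℕ} [NeZero n] (hn : 2 ≤ n) {i j : Fin n} :
    (cycleGraph n).Adj i j ↔ (i = j + 1 ∨ j = i + 1) := by
  obtain ⟨m, rfl⟩ : ∃ m, n = m + 2 := ⟨n - 2, by omega⟩
  rw [cycleGraph_adj]
  constructor
  · rintro (h | h)
    · exact Or.inl (by linear_combination h)
    · exact Or.inr (by linear_combination h)
  · rintro (h | h)
    · exact Or.inl (by linear_combination h)
    · exact Or.inr (by linear_combination h)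

lemma cycOn_of_emb {n : ℕ} [NeZero n] (hn : 2 ≤ n) {G : SimpleGraph α}
    (e : cycleGraph n ↪g G) : CycOn G n e := by
  refine ⟨e.injective, fun i => ?_, fun i j h => ?_⟩
  · exact e.map_rel_iff.2 ((cycleGraph_adj_iff hn).2 (Or.inr rfl))
  · exact ((cycleGraph_adj_iff hn).1 (e.map_rel_iff.1 h)).symm

def emb_of_cycOn {n : ℕ} [NeZero n] (hn : 2 ≤ n) {G : SimpleGraph α} {f : Fin n → α}
    (hf : CycOn G n f) : cycleGraph n ↪g G where
  toFun := f
  inj' := hf.1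
  map_rel_iff' := by
    intro i j
    rw [cycleGraph_adj_iff hn]
    constructor
    · intro h
      exact (hf.2.2 i j h).symm
    · rintro (h' | h')
      · rw [h']; exact (hf.2.1 j).symm
      · rw [h']; exact hf.2.1 i

open Fin.CommRing in
lemma CycOn.rotate {n : ℕ} [NeZero n] {G : SimpleGraph α} {f : Fin n → α}
    (hf : CycOn G n f) (s : Fin n) : CycOn G n (fun i => f (i + s)) := by
  obtain ⟨hinj, hadj, hind⟩ := hf
  refine ⟨fun i j h => ?_, fun i => ?_, fun i j h => ?_⟩
  · exact add_right_cancel (hinj h)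
  · have h1 := hadj (i + s)
    have e : i + s + 1 = i + 1 + s := by ring
    rwa [e] at h1
  · rcases hind _ _ h with h' | h'
    · exact Or.inl (by linear_combination h')
    · exact Or.inr (by linear_combination h')

open Fin.CommRing in
lemma CycOn.reflect {n : ℕ} [NeZero n] {G : SimpleGraph α} {f : Fin n → α}
    (hf : CycOn G n f) : CycOn G n (fun i => f (-i)) := by
  obtain ⟨hinj, hadj, hind⟩ := hf
  refine ⟨fun i j h => ?_, fun i => ?_, fun i j h => ?_⟩
  · exact neg_injective (hinj h)
  · have h1 := (hadj (-(i + 1))).symm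
    have e : -(i + 1) + 1 = -i := by ring
    rwa [e] at h1
  · rcases hind _ _ h with h' | h'
    · exact Or.inr (by linear_combination h')
    · exact Or.inl (by linear_combination h')
open SimpleGraph
variable {α β : Type}

/-- An induced cycle of length `m` indexed by naturals `0, …, m-1`. -/
structure NatCycOn (G : SimpleGraph α) (m : ℕ) (p : ℕ → α) : Prop where
  two_le : 2 ≤ m
  inj : ∀ k l, k < m → l < m → p k = p l → k = l
  adj : ∀ k, k + 1 < m → G.Adj (p k) (p (k + 1))
  wrap : G.Adj (p (m - 1)) (p 0)
  chord : ∀ k l, k < l → l < m → G.Adj (p k) (p l) → l = k + 1 ∨ (k = 0 ∧ l = m - 1)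

lemma fin_add_one_val {n : ℕ} [NeZero n] (i : Fin n) : (i + 1).val = (i.val + 1) % n := by
  simp [Fin.val_add, Fin.val_one', Nat.add_mod]

lemma toFin_succ {n : ℕ} [NeZero n] (k : ℕ) :
    (⟨k % n, Nat.mod_lt _ (NeZero.pos n)⟩ : Fin n) + 1
      = ⟨(k + 1) % n, Nat.mod_lt _ (NeZero.pos n)⟩ := by
  rw [Fin.ext_iff, fin_add_one_val]
  exact Nat.mod_add_mod k n 1

lemma NatCycOn.toCycOn {G : SimpleGraph α} {m : ℕ} [NeZero m] {p : ℕ → α}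
    (h : NatCycOn G m p) : CycOn G m (fun i : Fin m => p i.val) := by
  refine ⟨fun i j e => ?_, fun i => ?_, fun i j hadj => ?_⟩
  · exact Fin.ext (h.inj _ _ i.isLt j.isLt e)
  · simp only [fin_add_one_val]
    by_cases hi : i.val + 1 < m
    · rw [Nat.mod_eq_of_lt hi]
      exact h.adj i.val hi
    · have h2 : (i.val + 1) % m = 0 := by
        have : i.val + 1 = m := by omega
        simp [this]
      have hv : i.val = m - 1 := by omega
      rw [h2, hv]
      exact h.wrap
  · rcases lt_trichotomy i.val j.val with hlt | heq | hlt
    · rcases h.chord _ _ hlt j.isLt hadj with h' | ⟨h0, h1⟩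
      · left; rw [Fin.ext_iff, fin_add_one_val, Nat.mod_eq_of_lt (h' ▸ j.isLt)]; omega
      · right
        rw [Fin.ext_iff, fin_add_one_val]
        have : (j.val + 1) % m = 0 := by
          have hm := h.two_le
          have : j.val + 1 = m := by omega
          simp [this]
        omega
    · exact absurd hadj (by rw [Fin.ext_iff.2 heq]; exact G.irrefl)
    · rcases h.chord _ _ hlt i.isLt hadj.symm with h' | ⟨h0, h1⟩
      · right; rw [Fin.ext_iff, fin_add_one_val, Nat.mod_eq_of_lt (h' ▸ i.isLt)]; omega
      · left
        rw [Fin.ext_iff, fin_add_one_val]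
        have : (i.val + 1) % m = 0 := by
          have hm := h.two_le
          have : i.val + 1 = m := by omega
          simp [this]
        omega

lemma CycOn.toNat {G : SimpleGraph α} {n : ℕ} [NeZero n] (hn : 2 ≤ n) {f : Fin n → α}
    (hf : CycOn G n f) :
    NatCycOn G n (fun k => f ⟨k % n, Nat.mod_lt _ (NeZero.pos n)⟩) := by
  obtain ⟨hinj, hadj, hind⟩ := hf
  have hpos := NeZero.pos n
  refine ⟨hn, fun k l hk hl e => ?_, fun k hk => ?_, ?_, fun k l hkl hl ha => ?_⟩
  · have h1 := hinj e
    rw [Fin.ext_iff] at h1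
    simpa [Nat.mod_eq_of_lt hk, Nat.mod_eq_of_lt hl] using h1
  · have h1 := hadj ⟨k % n, Nat.mod_lt _ hpos⟩
    rwa [toFin_succ] at h1
  · have h1 := hadj ⟨(n - 1) % n, Nat.mod_lt _ hpos⟩
    rw [toFin_succ] at h1
    have e : (⟨(n - 1 + 1) % n, Nat.mod_lt _ hpos⟩ : Fin n) = ⟨0 % n, Nat.mod_lt _ hpos⟩ :=
      Fin.ext (by rw [show n - 1 + 1 = n by omega]; simp)
    rwa [e] at h1
  · have key : ∀ a b : ℕ, b < n →
        ((⟨b % n, Nat.mod_lt _ hpos⟩ : Fin n) = ⟨a % n, Nat.mod_lt _ hpos⟩ + 1) →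
        b = (a + 1) % n := by
      intro a b hb h'
      rw [toFin_succ, Fin.ext_iff] at h'
      simpa [Nat.mod_eq_of_lt hb] using h'
    rcases hind _ _ ha with h' | h'
    · have h2 := key k l hl h'
      rcases Nat.lt_or_ge (k + 1) n with h3 | h3
      · rw [Nat.mod_eq_of_lt h3] at h2; omega
      · rw [show k + 1 = n by omega] at h2; simp at h2; omega
    · have h2 := key l k (by omega) h'
      rcases Nat.lt_or_ge (l + 1) n with h3 | h3
      · rw [Nat.mod_eq_of_lt h3] at h2; omega
      · rw [show l + 1 = n by omega] at h2; simp at h2; omega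
section
variable {α : Type} {G : SimpleGraph α} {u v : α}

lemma IsChordal.noCyc (hG : IsChordal G) {n : ℕ} [NeZero n] (hn : 4 ≤ n) {f : Fin n → α}
    (hf : CycOn G n f) : False :=
  (hG n hn).false (emb_of_cycOn (by omega) hf)

lemma IsChordal.noNat (hG : IsChordal G) {m : ℕ} {p : ℕ → α} (hm : 4 ≤ m)
    (h : NatCycOn G m p) : False :=
  haveI : NeZero m := ⟨by omega⟩
  hG.noCyc hm h.toCycOn

lemma chordal_induce (hG : IsChordal G) (s : Set α) : IsChordal (G.induce s) :=
  fun n hn => ⟨fun e => (hG n hn).false ((SimpleGraph.Embedding.induce s).comp e)⟩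

lemma cycOn_induce {s : Set α} {n : ℕ} [NeZero n] {f : Fin n → α} (hf : CycOn G n f)
    (hs : ∀ i, f i ∈ s) : CycOn (G.induce s) n (fun i => ⟨f i, hs i⟩) := by
  obtain ⟨hinj, hadj, hind⟩ := hf
  refine ⟨fun i j e => hinj (congrArg Subtype.val e), fun i => ?_, fun i j h => hind i j ?_⟩
  · exact hadj i
  · exact h

lemma contractEdge_adj {x y : {x : α // x ≠ v}} : (contractEdge G u v).Adj x y ↔
    x ≠ y ∧ (G.Adj x.1 y.1 ∨ (x.1 = u ∧ G.Adj v y.1) ∨ (y.1 = u ∧ G.Adj x.1 v)) := Iff.rfl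

/-- Standing facts about a `NatCycOn` in the contracted graph whose `0`-th vertex is `u`. -/
lemma contract_facts {n : ℕ} {q : ℕ → {x : α // x ≠ v}}
    (hq : NatCycOn (contractEdge G u v) n q) (h0 : (q 0).1 = u) :
    (∀ k, 1 ≤ k → k < n → (q k).1 ≠ u) ∧
    (∀ k, 1 ≤ k → k + 1 < n → G.Adj ((q k).1) ((q (k + 1)).1)) ∧
    (∀ k l, 1 ≤ k → k < l → l < n → G.Adj ((q k).1) ((q l).1) → l = k + 1) ∧
    (∀ l, 2 ≤ l → l ≤ n - 2 → ¬G.Adj u ((q l).1) ∧ ¬G.Adj v ((q l).1)) := by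
  have hn2 := hq.two_le
  have F1 : ∀ k, 1 ≤ k → k < n → (q k).1 ≠ u := by
    intro k hk1 hkn he
    have : q k = q 0 := Subtype.ext (by rw [he, h0])
    have := hq.inj _ _ hkn (by omega) this
    omega
  have F5 : ∀ k l, 1 ≤ k → k < l → l < n → G.Adj ((q k).1) ((q l).1) → l = k + 1 := by
    intro k l hk1 hkl hln ha
    have hne : q k ≠ q l := fun e => by have := hq.inj _ _ (by omega) hln e; omega
    have := hq.chord k l hkl hln ⟨hne, Or.inl ha⟩
    omega
  have F2 : ∀ k, 1 ≤ k → k + 1 < n → G.Adj ((q k).1) ((q (k + 1)).1) := by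
    intro k hk1 hkn
    rcases (hq.adj k hkn).2 with h | ⟨h, -⟩ | ⟨h, -⟩
    · exact h
    · exact absurd h (F1 k hk1 (by omega))
    · exact absurd h (F1 (k + 1) (by omega) hkn)
  refine ⟨F1, F2, F5, fun l hl2 hln2 => ?_⟩
  constructor
  · intro ha
    have hne : q 0 ≠ q l := fun e => by have := hq.inj _ _ (by omega) (by omega) e; omega
    have := hq.chord 0 l (by omega) (by omega) ⟨hne, Or.inl (h0 ▸ ha)⟩
    omega
  · intro ha
    have hne : q 0 ≠ q l := fun e => by have := hq.inj _ _ (by omega) (by omega) e; omega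
    have := hq.chord 0 l (by omega) (by omega) ⟨hne, Or.inr (Or.inl ⟨h0, ha⟩)⟩
    omega

/-- The mixed case: the hole in `G/uv` goes through `u`, with `u` attached at one end via a
former `u`-edge and at the other end via a former `v`-edge.  Then inserting `v` gives a hole
of length `n+1` in `G`. -/
lemma mixedHole (hG : IsChordal G) (huv : G.Adj u v) {n : ℕ} (hn : 4 ≤ n)
    {q : ℕ → {x : α // x ≠ v}} (hq : NatCycOn (contractEdge G u v) n q)
    (h0 : (q 0).1 = u) (h1 : G.Adj u ((q 1).1)) (h2 : ¬G.Adj v ((q 1).1))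
    (h3 : G.Adj v ((q (n - 1)).1)) (h4 : ¬G.Adj u ((q (n - 1)).1)) : False := by
  obtain ⟨F1, F2, F5, F6⟩ := contract_facts hq h0
  set p : ℕ → α := fun k => if k < n then (q k).1 else v with hp
  have hplt : ∀ k, k < n → p k = (q k).1 := fun k hk => by simp [hp, hk]
  have hpn : p n = v := by simp [hp]
  refine hG.noNat (m := n + 1) (p := p) (by omega) ⟨by omega, ?_, ?_, ?_, ?_⟩
  · -- inj
    intro k l hk hl e
    rcases Nat.lt_or_ge k n with hk' | hk' <;> rcases Nat.lt_or_ge l n with hl' | hl'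
    · rw [hplt k hk', hplt l hl'] at e
      exact hq.inj _ _ hk' hl' (Subtype.ext e)
    · have hl'' : l = n := by omega
      rw [hplt k hk', hl'', hpn] at e
      exact absurd e (q k).2
    · have hk'' : k = n := by omega
      rw [hplt l hl', hk'', hpn] at e
      exact absurd e.symm (q l).2
    · omega
  · -- adj
    intro k hk
    rcases Nat.lt_or_ge (k + 1) n with hk' | hk'
    · rw [hplt k (by omega), hplt (k + 1) hk']
      rcases Nat.eq_zero_or_pos k with rfl | hk0
      · rw [h0]; exact h1
      · exact F2 k hk0 hk'
    · have hk'' : k = n - 1 := by omega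
      rw [hplt k (by omega), show k + 1 = n by omega, hpn, hk'']
      exact h3.symm
  · -- wrap
    rw [show n + 1 - 1 = n from rfl, hpn, hplt 0 (by omega), h0]
    exact huv.symm
  · -- chord
    intro k l hkl hl ha
    rcases Nat.lt_or_ge l n with hl' | hl'
    · rw [hplt k (by omega), hplt l hl'] at ha
      rcases Nat.eq_zero_or_pos k with rfl | hk0
      · rw [h0] at ha
        rcases Nat.lt_or_ge l (n - 1) with hl2 | hl2
        · rcases Nat.lt_or_ge l 2 with hl3 | hl3
          · left; omega
          · exact absurd ha (F6 l hl3 (by omega)).1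
        · exact absurd ha (by rw [show l = n - 1 by omega]; exact h4)
      · left; exact F5 k l hk0 hkl hl' ha
    · have hl'' : l = n := by omega
      rw [hplt k (by omega), hl'', hpn] at ha
      rcases Nat.eq_zero_or_pos k with rfl | hk0
      · right; rw [h0] at ha; omega
      · have hcontr : (contractEdge G u v).Adj (q k) (q 0) := by
          refine ⟨fun e => by have := hq.inj _ _ (by omega) (by omega) e; omega, ?_⟩
          exact Or.inr (Or.inr ⟨h0, ha⟩)
        have := hq.chord 0 k (by omega) (by omega) hcontr.symm
        rcases this with h' | h'
        · exfalso
          have hk1 : k = 1 := by omega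
          subst hk1
          exact h2 ha.symm
        · left; omega
end
section
variable {α : Type} {G : SimpleGraph α} {u v : α}

lemma toFin_neg {n : ℕ} [NeZero n] (k : ℕ) (hk : k ≤ n) :
    -(⟨k % n, Nat.mod_lt _ (NeZero.pos n)⟩ : Fin n)
      = ⟨(n - k) % n, Nat.mod_lt _ (NeZero.pos n)⟩ := by
  apply neg_eq_of_add_eq_zero_left
  rw [Fin.ext_iff, Fin.val_add]
  show ((n - k) % n + k % n) % n = (0 : Fin n).val
  rw [← Nat.add_mod, show n - k + k = n by omega, Nat.mod_self]
  simp

lemma contract_case_u (hG : IsChordal G) (huv : G.Adj u v) {n : ℕ} [NeZero n] (hn : 4 ≤ n)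
    {f : Fin n → {x : α // x ≠ v}} (hf : CycOn (contractEdge G u v) n f)
    (h0 : (f 0).1 = u) : False := by
  have hq := hf.toNat (by omega)
  set q : ℕ → {x : α // x ≠ v} := fun k => f ⟨k % n, Nat.mod_lt _ (NeZero.pos n)⟩ with hqdef
  have hq0 : q 0 = f 0 := congrArg f (Fin.ext (by simp))
  have h0' : (q 0).1 = u := by rw [hq0]; exact h0
  obtain ⟨F1, F2, F5, F6⟩ := contract_facts hq h0'
  have F3 : G.Adj u ((q 1).1) ∨ G.Adj v ((q 1).1) := by
    rcases (hq.adj 0 (by omega)).2 with h | ⟨h, h'⟩ | ⟨h, -⟩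
    · rw [h0'] at h; exact Or.inl h
    · exact Or.inr h'
    · exact absurd h (F1 1 le_rfl (by omega))
  have F4 : G.Adj ((q (n - 1)).1) u ∨ G.Adj ((q (n - 1)).1) v := by
    rcases hq.wrap.2 with h | ⟨h, -⟩ | ⟨h, h'⟩
    · rw [h0'] at h; exact Or.inl h
    · exact absurd h (F1 (n - 1) (by omega) (by omega))
    · exact Or.inr h'
  by_cases hA : G.Adj u ((q 1).1) ∧ G.Adj u ((q (n - 1)).1)
  · refine hG.noNat hn (p := fun k => (q k).1) ⟨by omega, ?_, ?_, ?_, ?_⟩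
    · exact fun k l hk hl e => hq.inj _ _ hk hl (Subtype.ext e)
    · intro k hk
      rcases Nat.eq_zero_or_pos k with rfl | hk0
      · rw [h0']; exact hA.1
      · exact F2 k hk0 hk
    · rw [h0']; exact hA.2.symm
    · intro k l hkl hl ha
      rcases Nat.eq_zero_or_pos k with rfl | hk0
      · rw [h0'] at ha
        rcases Nat.lt_or_ge l 2 with hl2 | hl2
        · left; omega
        · rcases Nat.lt_or_ge l (n - 1) with hl3 | hl3
          · exact absurd ha (F6 l hl2 (by omega)).1
          · right; omega
      · left; exact F5 k l hk0 hkl hl ha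
  by_cases hB : G.Adj v ((q 1).1) ∧ G.Adj v ((q (n - 1)).1)
  · refine hG.noNat hn (p := fun k => if k = 0 then v else (q k).1) ⟨by omega, ?_, ?_, ?_, ?_⟩
    · intro k l hk hl e
      rcases Nat.eq_zero_or_pos k with rfl | hk0 <;> rcases Nat.eq_zero_or_pos l with rfl | hl0
      · rfl
      · simp only [if_pos rfl, if_neg (by omega : l ≠ 0)] at e
        exact absurd e.symm (q l).2
      · simp only [if_pos rfl, if_neg (by omega : k ≠ 0)] at e
        exact absurd e (q k).2
      · simp only [if_neg (by omega : k ≠ 0), if_neg (by omega : l ≠ 0)] at e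
        exact hq.inj _ _ hk hl (Subtype.ext e)
    · intro k hk
      rcases Nat.eq_zero_or_pos k with rfl | hk0
      · simpa using hB.1
      · simp only [if_neg (by omega : k ≠ 0), if_neg (by omega : k + 1 ≠ 0)]
        exact F2 k hk0 hk
    · simp only [if_neg (by omega : n - 1 ≠ 0), if_pos rfl]
      exact hB.2.symm
    · intro k l hkl hl ha
      rcases Nat.eq_zero_or_pos k with rfl | hk0
      · simp only [if_pos rfl, if_neg (by omega : l ≠ 0)] at ha
        rcases Nat.lt_or_ge l 2 with hl2 | hl2
        · left; omega
        · rcases Nat.lt_or_ge l (n - 1) with hl3 | hl3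
          · exact absurd ha (F6 l hl2 (by omega)).2
          · right; omega
      · simp only [if_neg (by omega : k ≠ 0), if_neg (by omega : l ≠ 0)] at ha
        left; exact F5 k l hk0 hkl hl ha
  by_cases h1 : G.Adj u ((q 1).1)
  · have h4 : ¬G.Adj u ((q (n - 1)).1) := fun h => hA ⟨h1, h⟩
    have h3 : G.Adj v ((q (n - 1)).1) := by
      rcases F4 with h | h
      · exact absurd h.symm h4
      · exact h.symm
    have h2 : ¬G.Adj v ((q 1).1) := fun h => hB ⟨h, h3⟩
    exact mixedHole hG huv hn hq h0' h1 h2 h3 h4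
  · have h1' : G.Adj v ((q 1).1) := F3.resolve_left h1
    have h3' : ¬G.Adj v ((q (n - 1)).1) := fun h => hB ⟨h1', h⟩
    have h4' : G.Adj u ((q (n - 1)).1) := by
      rcases F4 with h | h
      · exact h.symm
      · exact absurd h.symm h3'
    -- reflect the cycle and use the previous (mixed) case
    have hrefl := hf.reflect
    have hq' := hrefl.toNat (n := n) (by omega)
    have e1 : f (-(⟨1 % n, Nat.mod_lt _ (NeZero.pos n)⟩ : Fin n)) = q (n - 1) := by
      apply congrArg f
      rw [toFin_neg 1 (by omega)]
    have e2 : f (-(⟨(n - 1) % n, Nat.mod_lt _ (NeZero.pos n)⟩ : Fin n)) = q 1 := by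
      apply congrArg f
      rw [toFin_neg (n - 1) (by omega)]
      exact Fin.ext (by rw [show n - (n - 1) = 1 by omega])
    have e0 : (f (-(⟨0 % n, Nat.mod_lt _ (NeZero.pos n)⟩ : Fin n))).1 = u := by
      have h00 : (⟨0 % n, Nat.mod_lt _ (NeZero.pos n)⟩ : Fin n) = 0 := Fin.ext (by simp)
      rw [h00, neg_zero]
      exact h0
    refine mixedHole hG huv hn hq' e0 ?_ ?_ ?_ ?_
    · rw [e1]; exact h4'
    · rw [e1]; exact h3'
    · rw [e2]; exact h1'
    · rw [e2]; exact h1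
lemma contract_chordal (hG : IsChordal G) (huv : G.Adj u v) :
    IsChordal (contractEdge G u v) := by
  intro n hn
  constructor
  intro e
  haveI : NeZero n := ⟨by omega⟩
  have hf := cycOn_of_emb (by omega) e
  by_cases hu : ∃ i, e i = (⟨u, huv.ne⟩ : {x : α // x ≠ v})
  · obtain ⟨i0, hi0⟩ := hu
    have hf' := hf.rotate i0
    have h0 : ((fun i => e (i + i0)) 0).1 = u := by
      show (e (0 + i0)).1 = u
      rw [zero_add, hi0]
    exact contract_case_u hG huv hn hf' h0
  · push_neg at hu
    refine hG.noCyc hn (f := fun i => (e i).1) ⟨?_, ?_, ?_⟩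
    · intro i j h
      exact e.injective (Subtype.ext h)
    · intro i
      rcases (hf.2.1 i).2 with h | ⟨h, -⟩ | ⟨h, -⟩
      · exact h
      · exact absurd (Subtype.ext h : e i = ⟨u, huv.ne⟩) (hu i)
      · exact absurd (Subtype.ext h : e (i + 1) = ⟨u, huv.ne⟩) (hu (i + 1))
    · intro i j h
      refine hf.2.2 i j ⟨fun hEq => ?_, Or.inl h⟩
      have h' : G.Adj (e i).1 (e j).1 := h
      rw [hEq] at h'
      exact G.irrefl h'
end
section
open Classical in
/-- The fan lemma: in a chordal graph, a cycle all of whose chords are incident with the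
vertex at position `0` has its `0`-vertex adjacent to all other cycle vertices. -/
lemma fanLemma {β : Type} {H : SimpleGraph β} (hH : IsChordal H) {n : ℕ} (hn : 4 ≤ n)
    {q : ℕ → β}
    (hinj : ∀ k l, k < n → l < n → q k = q l → k = l)
    (hadj : ∀ k, k + 1 < n → H.Adj (q k) (q (k + 1)))
    (hwrap : H.Adj (q (n - 1)) (q 0))
    (hchord : ∀ k l, k < l → l < n → H.Adj (q k) (q l) →
      l = k + 1 ∨ (k = 0 ∧ l = n - 1) ∨ k = 0) :
    ∀ t, 2 ≤ t → t ≤ n - 2 → H.Adj (q 0) (q t) := by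
  intro t ht2 htn
  by_contra hnot
  set P : ℕ → Prop := fun i => H.Adj (q 0) (q i) with hP
  have hP1 : P 1 := hadj 0 (by omega)
  set a := Nat.findGreatest P (t - 1) with ha
  have haP : P a := Nat.findGreatest_spec (m := 1) (by omega) hP1
  have ha1 : 1 ≤ a := Nat.le_findGreatest (by omega) hP1
  have hat : a ≤ t - 1 := Nat.findGreatest_le _
  have hamax : ∀ i, a < i → i ≤ t - 1 → ¬P i := fun i hi hi' =>
    Nat.findGreatest_is_greatest hi hi'
  have hPn : P (n - 1) := hwrap.symm
  have hex : ∃ i, t < i ∧ i ≤ n - 1 ∧ P i := ⟨n - 1, by omega, le_rfl, hPn⟩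
  set b := Nat.find hex with hb
  obtain ⟨hbt, hbn, hbP⟩ := Nat.find_spec hex
  have hbmin : ∀ i, t < i → i < b → ¬P i := fun i h1 h2 hp =>
    Nat.find_min hex h2 ⟨h1, by omega, hp⟩
  set m := b - a + 2 with hm
  refine hH.noNat (m := m) (p := fun k => if k = 0 then q 0 else q (a + k - 1))
    (by omega) ⟨by omega, ?_, ?_, ?_, ?_⟩
  · intro k l hk hl e
    rcases Nat.eq_zero_or_pos k with rfl | hk0 <;> rcases Nat.eq_zero_or_pos l with rfl | hl0
    · rfl
    · simp only [if_pos rfl, if_neg (by omega : l ≠ 0)] at e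
      have := hinj 0 (a + l - 1) (by omega) (by omega) e
      omega
    · simp only [if_pos rfl, if_neg (by omega : k ≠ 0)] at e
      have := hinj 0 (a + k - 1) (by omega) (by omega) e.symm
      omega
    · simp only [if_neg (by omega : k ≠ 0), if_neg (by omega : l ≠ 0)] at e
      have := hinj (a + k - 1) (a + l - 1) (by omega) (by omega) e
      omega
  · intro k hk
    rcases Nat.eq_zero_or_pos k with rfl | hk0
    · simp only [if_pos rfl, if_neg (by omega : (0:ℕ) + 1 ≠ 0)]
      rw [show a + (0 + 1) - 1 = a by omega]
      exact haP
    · simp only [if_neg (by omega : k ≠ 0), if_neg (by omega : k + 1 ≠ 0)]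
      rw [show a + (k + 1) - 1 = (a + k - 1) + 1 by omega]
      exact hadj (a + k - 1) (by omega)
  · simp only [if_neg (by omega : m - 1 ≠ 0), if_pos rfl]
    rw [show a + (m - 1) - 1 = b by omega]
    exact hbP.symm
  · intro k l hkl hl hAdj
    rcases Nat.eq_zero_or_pos k with rfl | hk0
    · simp only [if_pos rfl, if_neg (by omega : l ≠ 0)] at hAdj
      set i := a + l - 1 with hi
      have hPi : P i := hAdj
      rcases Nat.lt_or_ge i t with hit | hit
      · rcases Nat.lt_or_ge a i with hai | hai
        · exact absurd hPi (hamax i hai (by omega))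
        · left; omega
      · rcases Nat.eq_or_lt_of_le hit with heq | hit'
        · exact absurd hPi (by rw [← heq]; exact hnot)
        · rcases Nat.lt_or_ge i b with hib | hib
          · exact absurd hPi (hbmin i hit' hib)
          · right; omega
    · simp only [if_neg (by omega : k ≠ 0), if_neg (by omega : l ≠ 0)] at hAdj
      have := hchord (a + k - 1) (a + l - 1) (by omega) (by omega) hAdj
      left; omega
end
section
variable {α : Type} {G : SimpleGraph α} {u v : α} {A : Set α}

/-- Both `u` and `v` on the hole (consecutively): contract, or for length 4 use the
separation. -/
lemma scenario_uv (hC : IsChordal (contractEdge G u v)) (huv : G.Adj u v)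
    (hnA : ∀ x, G.Adj u x ∨ G.Adj v x ∨ x = u → x ∉ A) (hvA : v ∉ A)
    {n : ℕ} (hn : 4 ≤ n) {q : ℕ → α} (hq : NatCycOn G n q)
    (hq0 : q 0 = u) (hq1 : q 1 = v) (hA : ∃ k, k < n ∧ q k ∈ A) : False := by
  rcases Nat.lt_or_ge n 5 with hn4 | hn5
  · -- n = 4 : all four vertices avoid A
    have hn' : n = 4 := by omega
    subst hn'
    obtain ⟨k, hk, hkA⟩ := hA
    have h2 : G.Adj v (q 2) := by
      have := hq.adj 1 (by omega)
      rwa [hq1] at this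
    have h3 : G.Adj u (q 3) := by
      have := hq.wrap
      rw [hq0] at this
      exact this.symm
    interval_cases k
    · exact hnA (q 0) (Or.inr (Or.inr hq0)) hkA
    · exact hvA (hq1 ▸ hkA)
    · exact hnA (q 2) (Or.inr (Or.inl h2)) hkA
    · exact hnA (q 3) (Or.inl h3) hkA
  · -- n ≥ 5 : contract the edge and get a hole of length n - 1 in G/uv
    have hqu : ∀ k, k < n → k ≠ 0 → q k ≠ u := fun k hk h0 e => by
      have := hq.inj k 0 hk (by omega) (by rw [e, hq0])
      omega
    have hqv : ∀ k, k < n → k ≠ 1 → q k ≠ v := fun k hk h1 e => by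
      have := hq.inj k 1 hk (by omega) (by rw [e, hq1])
      omega
    set p : ℕ → {x : α // x ≠ v} := fun k =>
      if h : k = 0 ∨ n - 1 ≤ k then ⟨u, huv.ne⟩
      else ⟨q (k + 1), hqv (k + 1) (by omega) (by omega)⟩ with hp
    have hp0 : ∀ k, k = 0 ∨ n - 1 ≤ k → p k = ⟨u, huv.ne⟩ := fun k h => by
      simp only [hp]; rw [dif_pos h]
    have hpk : ∀ k, 1 ≤ k → k ≤ n - 2 → (p k).1 = q (k + 1) := fun k h1 h2 => by
      simp only [hp]; rw [dif_neg (by omega)]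
    refine hC.noNat (m := n - 1) (p := p) (by omega) ⟨by omega, ?_, ?_, ?_, ?_⟩
    · intro k l hk hl e
      rcases Nat.eq_zero_or_pos k with rfl | hk0 <;> rcases Nat.eq_zero_or_pos l with rfl | hl0
      · rfl
      · exfalso
        rw [hp0 0 (Or.inl rfl)] at e
        have : u = q (l + 1) := by
          have := congrArg Subtype.val e
          rwa [hpk l hl0 (by omega)] at this
        exact hqu (l + 1) (by omega) (by omega) this.symm
      · exfalso
        rw [hp0 0 (Or.inl rfl)] at e
        have : u = q (k + 1) := by
          have := congrArg Subtype.val e.symm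
          rwa [hpk k hk0 (by omega)] at this
        exact hqu (k + 1) (by omega) (by omega) this.symm
      · have e' := congrArg Subtype.val e
        rw [hpk k hk0 (by omega), hpk l hl0 (by omega)] at e'
        have := hq.inj (k + 1) (l + 1) (by omega) (by omega) e'
        omega
    · intro k hk
      rcases Nat.eq_zero_or_pos k with rfl | hk0
      · refine ⟨?_, ?_⟩
        · intro e
          have e' := congrArg Subtype.val e
          rw [hp0 0 (Or.inl rfl), hpk 1 le_rfl (by omega)] at e'
          exact hqu 2 (by omega) (by omega) e'.symm
        · right; left
          rw [hp0 0 (Or.inl rfl), hpk 1 le_rfl (by omega)]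
          refine ⟨rfl, ?_⟩
          have := hq.adj 1 (by omega)
          rwa [hq1] at this
      · refine ⟨?_, ?_⟩
        · intro e
          have e' := congrArg Subtype.val e
          rw [hpk k hk0 (by omega), hpk (k + 1) (by omega) (by omega)] at e'
          have := hq.inj (k + 1) (k + 2) (by omega) (by omega) e'
          omega
        · left
          rw [hpk k hk0 (by omega), hpk (k + 1) (by omega) (by omega)]
          have := hq.adj (k + 1) (by omega)
          rwa [show k + 1 + 1 = k + 2 from rfl] at this
    · refine ⟨?_, ?_⟩
      · intro e
        have e' := congrArg Subtype.val e
        rw [hp0 0 (Or.inl rfl), hpk (n - 1 - 1) (by omega) (by omega)] at e'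
        exact hqu (n - 1 - 1 + 1) (by omega) (by omega) e'
      · left
        rw [hp0 0 (Or.inl rfl), hpk (n - 1 - 1) (by omega) (by omega)]
        rw [show n - 1 - 1 + 1 = n - 1 by omega]
        have := hq.wrap
        rwa [hq0] at this
    · intro k l hkl hl hAdj
      rcases Nat.eq_zero_or_pos k with rfl | hk0
      · rw [hp0 0 (Or.inl rfl)] at hAdj
        rcases hAdj.2 with h | ⟨-, h⟩ | ⟨h, -⟩
        · -- G.Adj u (q (l+1))
          rw [hpk l (by omega) (by omega)] at h
          have h' : G.Adj (q 0) (q (l + 1)) := by rw [hq0]; exact h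
          have := hq.chord 0 (l + 1) (by omega) (by omega) h'
          right; omega
        · -- G.Adj v (q (l+1))
          rw [hpk l (by omega) (by omega)] at h
          have h' : G.Adj (q 1) (q (l + 1)) := by rw [hq1]; exact h
          have := hq.chord 1 (l + 1) (by omega) (by omega) h'
          left; omega
        · exfalso
          rw [hpk l (by omega) (by omega)] at h
          exact hqu (l + 1) (by omega) (by omega) h
      · rcases hAdj.2 with h | ⟨h, -⟩ | ⟨h, -⟩
        · rw [hpk k hk0 (by omega), hpk l (by omega) (by omega)] at h
          have := hq.chord (k + 1) (l + 1) (by omega) (by omega) h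
          left; omega
        · exfalso
          rw [hpk k hk0 (by omega)] at h
          exact hqu (k + 1) (by omega) (by omega) h
        · exfalso
          rw [hpk l (by omega) (by omega)] at h
          exact hqu (l + 1) (by omega) (by omega) h

/-- Unfolding the conclusion of the fan lemma in the contracted graph. -/
lemma apex_analysis (hC : IsChordal (contractEdge G u v)) (huv : G.Adj u v) {n : ℕ}
    (hn : 4 ≤ n) {s : ℕ → {x : α // x ≠ v}} (h0 : s 0 = ⟨u, huv.ne⟩)
    (hinj : ∀ k l, k < n → l < n → s k = s l → k = l)
    (hadj : ∀ k, k + 1 < n → (contractEdge G u v).Adj (s k) (s (k + 1)))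
    (hwrap : (contractEdge G u v).Adj (s (n - 1)) (s 0))
    (hchord : ∀ k l, k < l → l < n → (contractEdge G u v).Adj (s k) (s l) →
      l = k + 1 ∨ (k = 0 ∧ l = n - 1) ∨ k = 0) :
    ∀ t, 1 ≤ t → t < n → G.Adj u ((s t).1) ∨ G.Adj v ((s t).1) ∨ (s t).1 = u := by
  have key : ∀ t, t < n → (contractEdge G u v).Adj (s 0) (s t) →
      G.Adj u ((s t).1) ∨ G.Adj v ((s t).1) ∨ (s t).1 = u := by
    intro t ht hAdj
    rw [h0] at hAdj
    rcases hAdj.2 with h | ⟨-, h⟩ | ⟨h, -⟩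
    · exact Or.inl h
    · exact Or.inr (Or.inl h)
    · exact Or.inr (Or.inr h)
  intro t ht1 htn
  rcases Nat.eq_or_lt_of_le ht1 with h1 | ht2
  · exact key t htn (by rw [← h1] at *; exact hadj 0 (by omega))
  · rcases Nat.lt_or_ge t (n - 1) with ht3 | ht3
    · exact key t htn (fanLemma hC hn hinj hadj hwrap hchord t (by omega) (by omega))
    · have ht4 : t = n - 1 := by omega
      exact key t htn (by rw [ht4]; exact hwrap.symm)
end
section
variable {α : Type} {G : SimpleGraph α} {u v : α} {A : Set α}

lemma toFin_coe {n : ℕ} [NeZero n] (j : Fin n) :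
    (⟨j.val % n, Nat.mod_lt _ (NeZero.pos n)⟩ : Fin n) = j :=
  Fin.ext (Nat.mod_eq_of_lt j.isLt)

/-- `u` on the hole, `v` not. -/
lemma scenario_u (hC : IsChordal (contractEdge G u v)) (huv : G.Adj u v)
    (hnA : ∀ x, G.Adj u x ∨ G.Adj v x ∨ x = u → x ∉ A)
    {n : ℕ} (hn : 4 ≤ n) {q : ℕ → α} (hq : NatCycOn G n q)
    (hq0 : q 0 = u) (hqv : ∀ k, k < n → q k ≠ v)
    (hA : ∃ k, k < n ∧ q k ∈ A) : False := by
  set s : ℕ → {x : α // x ≠ v} := fun k =>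
    if h : k < n then ⟨q k, hqv k h⟩ else ⟨u, huv.ne⟩ with hsdef
  have hs : ∀ k, k < n → (s k).1 = q k := fun k h => by simp only [hsdef]; rw [dif_pos h]
  have hinj : ∀ k l, k < n → l < n → s k = s l → k = l := by
    intro k l hk hl e
    have e' := congrArg Subtype.val e
    rw [hs k hk, hs l hl] at e'
    exact hq.inj _ _ hk hl e'
  have hne : ∀ k l, k < n → l < n → k ≠ l → s k ≠ s l := fun k l hk hl hkl e =>
    hkl (hinj k l hk hl e)
  have hadj : ∀ k, k + 1 < n → (contractEdge G u v).Adj (s k) (s (k + 1)) := by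
    intro k hk
    refine ⟨hne k (k + 1) (by omega) hk (by omega), Or.inl ?_⟩
    rw [hs k (by omega), hs (k + 1) hk]
    exact hq.adj k hk
  have hwrap : (contractEdge G u v).Adj (s (n - 1)) (s 0) := by
    refine ⟨hne (n - 1) 0 (by omega) (by omega) (by omega), Or.inl ?_⟩
    rw [hs (n - 1) (by omega), hs 0 (by omega)]
    exact hq.wrap
  have hchord : ∀ k l, k < l → l < n → (contractEdge G u v).Adj (s k) (s l) →
      l = k + 1 ∨ (k = 0 ∧ l = n - 1) ∨ k = 0 := by
    intro k l hkl hl hAdj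
    rcases hAdj.2 with h | ⟨h, -⟩ | ⟨h, -⟩
    · rw [hs k (by omega), hs l hl] at h
      rcases hq.chord k l hkl hl h with h' | h'
      · exact Or.inl h'
      · exact Or.inr (Or.inl h')
    · rw [hs k (by omega)] at h
      right; right
      have : q k = q 0 := by rw [h, hq0]
      exact hq.inj k 0 (by omega) (by omega) this
    · exfalso
      rw [hs l hl] at h
      have : q l = q 0 := by rw [h, hq0]
      have := hq.inj l 0 hl (by omega) this
      omega
  have hs0 : s 0 = ⟨u, huv.ne⟩ := Subtype.ext (by rw [hs 0 (by omega), hq0])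
  have ana := apex_analysis hC huv hn hs0 hinj hadj hwrap hchord
  obtain ⟨k, hk, hkA⟩ := hA
  rcases Nat.eq_zero_or_pos k with rfl | hk0
  · exact hnA (q 0) (Or.inr (Or.inr hq0)) hkA
  · have := ana k hk0 hk
    rw [hs k hk] at this
    exact hnA (q k) this hkA

/-- `v` on the hole, `u` not. -/
lemma scenario_v (hC : IsChordal (contractEdge G u v)) (huv : G.Adj u v)
    (hnA : ∀ x, G.Adj u x ∨ G.Adj v x ∨ x = u → x ∉ A) (hvA : v ∉ A)
    {n : ℕ} (hn : 4 ≤ n) {q : ℕ → α} (hq : NatCycOn G n q)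
    (hq0 : q 0 = v) (hqu : ∀ k, k < n → q k ≠ u)
    (hA : ∃ k, k < n ∧ q k ∈ A) : False := by
  have hqv : ∀ k, 1 ≤ k → k < n → q k ≠ v := fun k h1 hk e => by
    have := hq.inj k 0 hk (by omega) (by rw [e, hq0])
    omega
  set s : ℕ → {x : α // x ≠ v} := fun k =>
    if h : 1 ≤ k ∧ k < n then ⟨q k, hqv k h.1 h.2⟩ else ⟨u, huv.ne⟩ with hsdef
  have hs : ∀ k, 1 ≤ k → k < n → (s k).1 = q k := fun k h1 h2 => by
    simp only [hsdef]; rw [dif_pos ⟨h1, h2⟩]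
  have hs0 : s 0 = ⟨u, huv.ne⟩ := by simp only [hsdef]; rw [dif_neg (by omega)]
  have hinj : ∀ k l, k < n → l < n → s k = s l → k = l := by
    intro k l hk hl e
    have e' := congrArg Subtype.val e
    rcases Nat.eq_zero_or_pos k with rfl | hk0 <;> rcases Nat.eq_zero_or_pos l with rfl | hl0
    · rfl
    · rw [hs0, hs l hl0 hl] at e'
      exact absurd e'.symm (hqu l hl)
    · rw [hs0, hs k hk0 hk] at e'
      exact absurd e' (hqu k hk)
    · rw [hs k hk0 hk, hs l hl0 hl] at e'
      exact hq.inj _ _ hk hl e'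
  have hne : ∀ k l, k < n → l < n → k ≠ l → s k ≠ s l := fun k l hk hl hkl e =>
    hkl (hinj k l hk hl e)
  have hadj : ∀ k, k + 1 < n → (contractEdge G u v).Adj (s k) (s (k + 1)) := by
    intro k hk
    refine ⟨hne k (k + 1) (by omega) hk (by omega), ?_⟩
    rcases Nat.eq_zero_or_pos k with rfl | hk0
    · right; left
      rw [hs0, hs 1 le_rfl hk]
      exact ⟨rfl, by rw [← hq0]; exact hq.adj 0 hk⟩
    · left
      rw [hs k hk0 (by omega), hs (k + 1) (by omega) hk]
      exact hq.adj k hk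
  have hwrap : (contractEdge G u v).Adj (s (n - 1)) (s 0) := by
    refine ⟨hne (n - 1) 0 (by omega) (by omega) (by omega), ?_⟩
    right; right
    rw [hs0, hs (n - 1) (by omega) (by omega)]
    exact ⟨rfl, by rw [← hq0]; exact hq.wrap⟩
  have hchord : ∀ k l, k < l → l < n → (contractEdge G u v).Adj (s k) (s l) →
      l = k + 1 ∨ (k = 0 ∧ l = n - 1) ∨ k = 0 := by
    intro k l hkl hl hAdj
    rcases Nat.eq_zero_or_pos k with rfl | hk0
    · exact Or.inr (Or.inr rfl)
    rcases hAdj.2 with h | ⟨h, -⟩ | ⟨h, -⟩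
    · rw [hs k hk0 (by omega), hs l (by omega) hl] at h
      rcases hq.chord k l hkl hl h with h' | h'
      · exact Or.inl h'
      · exact Or.inr (Or.inl h')
    · rw [hs k hk0 (by omega)] at h
      exact absurd h (hqu k (by omega))
    · rw [hs l (by omega) hl] at h
      exact absurd h (hqu l hl)
  have ana := apex_analysis hC huv hn hs0 hinj hadj hwrap hchord
  obtain ⟨k, hk, hkA⟩ := hA
  rcases Nat.eq_zero_or_pos k with rfl | hk0
  · exact hvA (hq0 ▸ hkA)
  · have := ana k hk0 hk
    rw [hs k hk0 hk] at this
    exact hnA (q k) this hkA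

/-- Neither `u` nor `v` on the hole. -/
lemma scenario_none (hC : IsChordal (contractEdge G u v)) (huv : G.Adj u v)
    {n : ℕ} (hn : 4 ≤ n) {q : ℕ → α} (hq : NatCycOn G n q)
    (hqu : ∀ k, k < n → q k ≠ u) (hqv : ∀ k, k < n → q k ≠ v) : False := by
  set s : ℕ → {x : α // x ≠ v} := fun k =>
    if h : k < n then ⟨q k, hqv k h⟩ else ⟨u, huv.ne⟩ with hsdef
  have hs : ∀ k, k < n → (s k).1 = q k := fun k h => by simp only [hsdef]; rw [dif_pos h]
  have hinj : ∀ k l, k < n → l < n → s k = s l → k = l := by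
    intro k l hk hl e
    have e' := congrArg Subtype.val e
    rw [hs k hk, hs l hl] at e'
    exact hq.inj _ _ hk hl e'
  have hne : ∀ k l, k < n → l < n → k ≠ l → s k ≠ s l := fun k l hk hl hkl e =>
    hkl (hinj k l hk hl e)
  refine hC.noNat hn (p := s) ⟨by omega, hinj, ?_, ?_, ?_⟩
  · intro k hk
    refine ⟨hne k (k + 1) (by omega) hk (by omega), Or.inl ?_⟩
    rw [hs k (by omega), hs (k + 1) hk]
    exact hq.adj k hk
  · refine ⟨hne (n - 1) 0 (by omega) (by omega) (by omega), Or.inl ?_⟩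
    rw [hs (n - 1) (by omega), hs 0 (by omega)]
    exact hq.wrap
  · intro k l hkl hl hAdj
    rcases hAdj.2 with h | ⟨h, -⟩ | ⟨h, -⟩
    · rw [hs k (by omega), hs l hl] at h
      exact hq.chord k l hkl hl h
    · rw [hs k (by omega)] at h
      exact absurd h (hqu k (by omega))
    · rw [hs l hl] at h
      exact absurd h (hqu l hl)
end

/-- Let `(A, X, B)` be a tri-separation of `G` (a partition of the vertex set with no edges
between `A` and `B`) and let `u, v ∈ B` with `uv ∈ E(G)`. Then `G` is chordal if and only
if `G[A ∪ X]`, `G[B ∪ X]`, and `G / uv` are all chordal. -/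
theorem chordal_iff_contract_triseparation {α : Type} (G : SimpleGraph α) (A X B : Set α)
    (hcover : A ∪ X ∪ B = Set.univ)
    (hAX : Disjoint A X) (hAB : Disjoint A B) (hXB : Disjoint X B)
    (hsep : ∀ a ∈ A, ∀ b ∈ B, ¬ G.Adj a b)
    (u v : α) (hu : u ∈ B) (hv : v ∈ B) (huv : G.Adj u v) :
    IsChordal G ↔
      (IsChordal (G.induce (A ∪ X)) ∧ IsChordal (G.induce (B ∪ X)) ∧
        IsChordal (contractEdge G u v)) := by
  constructor
  · intro hG
    exact ⟨chordal_induce hG _, chordal_induce hG _, contract_chordal hG huv⟩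
  · rintro ⟨hAXc, hBXc, hCc⟩
    intro n hn
    constructor
    intro e
    haveI : NeZero n := ⟨by omega⟩
    have hf := cycOn_of_emb (n := n) (by omega) e
    by_cases hsubA : ∀ i, (e i : α) ∈ A ∪ X
    · exact hAXc.noCyc hn (cycOn_induce hf hsubA)
    by_cases hsubB : ∀ i, (e i : α) ∈ B ∪ X
    · exact hBXc.noCyc hn (cycOn_induce hf hsubB)
    push_neg at hsubB
    obtain ⟨jA, hjA⟩ := hsubB
    have hjAA : (e jA : α) ∈ A := by
      have hx : (e jA : α) ∈ A ∪ X ∪ B := by rw [hcover]; exact Set.mem_univ _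
      rcases hx with (h | h) | h
      · exact h
      · exact absurd (Or.inr h) hjA
      · exact absurd (Or.inl h) hjA
    have hnA : ∀ x, G.Adj u x ∨ G.Adj v x ∨ x = u → x ∉ A := by
      intro x hx hxA
      rcases hx with h | h | h
      · exact hsep x hxA u hu h.symm
      · exact hsep x hxA v hv h.symm
      · exact Set.disjoint_left.mp hAB (h ▸ hxA) hu
    have hvA : v ∉ A := fun h => Set.disjoint_left.mp hAB h hv
    have e0n : (⟨0 % n, Nat.mod_lt _ (NeZero.pos n)⟩ : Fin n) = 0 := Fin.ext (by simp)
    have e1n : (⟨1 % n, Nat.mod_lt _ (NeZero.pos n)⟩ : Fin n) = 1 :=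
      Fin.ext (by simp [Fin.val_one'])
    by_cases huR : ∃ i, e i = u
    · obtain ⟨iu, hiu⟩ := huR
      have hf' := hf.rotate iu
      have hq' := hf'.toNat (by omega)
      by_cases hvR : ∃ i, e i = v
      · obtain ⟨iv, hiv⟩ := hvR
        have hAdjuv : G.Adj (e (0 + iu)) (e (iv - iu + iu)) := by
          rw [zero_add, hiu, sub_add_cancel, hiv]; exact huv
        rcases hf'.2.2 0 (iv - iu) hAdjuv with h1 | h1
        · refine scenario_uv hCc huv hnA hvA hn hq' ?_ ?_
            ⟨(jA - iu).val, (jA - iu).isLt, ?_⟩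
          · show e ((⟨0 % n, Nat.mod_lt _ (NeZero.pos n)⟩ : Fin n) + iu) = u
            rw [e0n, zero_add, hiu]
          · show e ((⟨1 % n, Nat.mod_lt _ (NeZero.pos n)⟩ : Fin n) + iu) = v
            rw [e1n, show (1 : Fin n) = iv - iu by open Fin.CommRing in linear_combination -h1,
              sub_add_cancel, hiv]
          · show e ((⟨(jA - iu).val % n, Nat.mod_lt _ (NeZero.pos n)⟩ : Fin n) + iu) ∈ A
            rw [toFin_coe, sub_add_cancel]
            exact hjAA
        · have hf'' := hf'.reflect
          have hq'' := hf''.toNat (by omega)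
          refine scenario_uv hCc huv hnA hvA hn hq'' ?_ ?_
            ⟨(-(jA - iu)).val, Fin.isLt _, ?_⟩
          · show e (-(⟨0 % n, Nat.mod_lt _ (NeZero.pos n)⟩ : Fin n) + iu) = u
            rw [e0n, neg_zero, zero_add, hiu]
          · show e (-(⟨1 % n, Nat.mod_lt _ (NeZero.pos n)⟩ : Fin n) + iu) = v
            rw [e1n, show -(1 : Fin n) = iv - iu by open Fin.CommRing in linear_combination h1,
              sub_add_cancel, hiv]
          · show e (-(⟨(-(jA - iu)).val % n, Nat.mod_lt _ (NeZero.pos n)⟩ : Fin n) + iu) ∈ A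
            rw [toFin_coe, neg_neg, sub_add_cancel]
            exact hjAA
      · push_neg at hvR
        refine scenario_u hCc huv hnA hn hq' ?_ (fun k hk => hvR _) ⟨(jA - iu).val,
          (jA - iu).isLt, ?_⟩
        · show e ((⟨0 % n, Nat.mod_lt _ (NeZero.pos n)⟩ : Fin n) + iu) = u
          rw [e0n, zero_add, hiu]
        · show e ((⟨(jA - iu).val % n, Nat.mod_lt _ (NeZero.pos n)⟩ : Fin n) + iu) ∈ A
          rw [toFin_coe, sub_add_cancel]
          exact hjAA
    · push_neg at huR
      by_cases hvR : ∃ i, e i = v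
      · obtain ⟨iv, hiv⟩ := hvR
        have hf' := hf.rotate iv
        have hq' := hf'.toNat (by omega)
        refine scenario_v hCc huv hnA hvA hn hq' ?_ (fun k hk => huR _) ⟨(jA - iv).val,
          (jA - iv).isLt, ?_⟩
        · show e ((⟨0 % n, Nat.mod_lt _ (NeZero.pos n)⟩ : Fin n) + iv) = v
          rw [e0n, zero_add, hiv]
        · show e ((⟨(jA - iv).val % n, Nat.mod_lt _ (NeZero.pos n)⟩ : Fin n) + iv) ∈ A
          rw [toFin_coe, sub_add_cancel]
          exact hjAA
      · push_neg at hvR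
        exact scenario_none hCc huv hn (hf.toNat (by omega)) (fun k hk => huR _)
          (fun k hk => hvR _)
end

section
/- Let H be a hereditary graph class, let G be a graph, let A1 and A2 be disjoint vertex subsets of G, and let S1, S2 be families of subsets of A1 and A2 respectively that are A1-exhaustive and A2-exhaustive for H-deletion on G. Then for any set A′ containing A1 ∪ A2, the family S′ = { S1 ∪ S2 ∪ S* : S1 ∈ S1, S2 ∈ S2, S* ⊆ A′ \ (A1 ∪ A2) } is A′-exhaustive for H-deletion on G and has size at most |S1|·|S2|·2^{|A′ \ (A1 ∪ A2)|}. -/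
/-- A graph class is hereditary if it is closed under taking induced subgraphs. -/
def Hereditary (H : GraphClass) : Prop :=
  ∀ (V : Type) (G : SimpleGraph V) (s : Set V), H V G → H s (G.induce s)

/-- A family `F` of subsets of `A` is `A`-exhaustive for `H`-deletion on `G` if for every
minimum-size set `S ⊆ V(G)` with `G - S ∈ H` there exists `S_A ∈ F` such that the set
`S' := (S \ A) ∪ S_A` satisfies `|S'| ≤ |S|` and `G - S' ∈ H`. -/
def ExhaustiveFor (H : GraphClass) {V : Type} [Fintype V] (G : SimpleGraph V)
    (A : Set V) (F : Set (Set V)) : Prop :=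
  (∀ s ∈ F, s ⊆ A) ∧
  ∀ S : Set V, H _ (G.induce (Sᶜ : Set V)) →
    (∀ S'' : Set V, H _ (G.induce (S''ᶜ : Set V)) → S.ncard ≤ S''.ncard) →
    ∃ SA ∈ F, ((S \ A) ∪ SA).ncard ≤ S.ncard ∧
      H _ (G.induce ((((S \ A) ∪ SA)ᶜ : Set V)))

/-- The combined family `{ s₁ ∪ s₂ ∪ s* : s₁ ∈ F₁, s₂ ∈ F₂, s* ⊆ R }`. -/
def combineFam {V : Type} (F₁ F₂ : Set (Set V)) (R : Set V) : Set (Set V) :=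
  {s : Set V | ∃ s₁ ∈ F₁, ∃ s₂ ∈ F₂, ∃ sstar : Set V, sstar ⊆ R ∧ s = s₁ ∪ s₂ ∪ sstar}

lemma ncard_powerset_aux {V : Type} [Fintype V] (R : Set V) :
    ({s : Set V | s ⊆ R} : Set (Set V)).ncard = 2 ^ R.ncard := by
  classical
  have h : ({s : Set V | s ⊆ R} : Set (Set V)) = Set.powerset R := rfl
  rw [h, ← Nat.card_coe_set_eq, ← Nat.card_coe_set_eq,
    Nat.card_congr (Equiv.Set.powerset R),
    Nat.card_eq_fintype_card, Nat.card_eq_fintype_card, Fintype.card_set]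

lemma ncard_prod_aux {α β : Type} (s : Set α) (t : Set β) :
    (s ×ˢ t).ncard = s.ncard * t.ncard := by
  rw [← Nat.card_coe_set_eq, ← Nat.card_coe_set_eq, ← Nat.card_coe_set_eq,
    Nat.card_congr (Equiv.Set.prod s t), Nat.card_prod]

/-- Let `H` be a hereditary graph class, `A₁, A₂` disjoint vertex subsets of `G`, and
`F₁, F₂` families that are `A₁`- and `A₂`-exhaustive for `H`-deletion on `G`. Then for any
set `A' ⊇ A₁ ∪ A₂`, the family `{ s₁ ∪ s₂ ∪ s* : s₁ ∈ F₁, s₂ ∈ F₂, s* ⊆ A' \ (A₁ ∪ A₂) }`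
is `A'`-exhaustive for `H`-deletion on `G` and has size at most
`|F₁| ⋅ |F₂| ⋅ 2 ^ |A' \ (A₁ ∪ A₂)|`. -/
theorem combine_exhaustive_families (H : GraphClass) (hHer : Hereditary H)
    {V : Type} [Fintype V] (G : SimpleGraph V)
    (A₁ A₂ A' : Set V) (hdisj : Disjoint A₁ A₂) (hsub : A₁ ∪ A₂ ⊆ A')
    (F₁ F₂ : Set (Set V))
    (h₁ : ExhaustiveFor H G A₁ F₁) (h₂ : ExhaustiveFor H G A₂ F₂) :
    ExhaustiveFor H G A' (combineFam F₁ F₂ (A' \ (A₁ ∪ A₂))) ∧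
    (combineFam F₁ F₂ (A' \ (A₁ ∪ A₂))).ncard ≤
      F₁.ncard * F₂.ncard * 2 ^ (A' \ (A₁ ∪ A₂)).ncard := by
  constructor
  · constructor
    · rintro s ⟨s₁, hs₁, s₂, hs₂, st, hst, rfl⟩
      apply Set.union_subset
      apply Set.union_subset
      · exact (h₁.1 s₁ hs₁).trans ((Set.subset_union_left).trans hsub)
      · exact (h₂.1 s₂ hs₂).trans ((Set.subset_union_right).trans hsub)
      · exact hst.trans Set.diff_subset
    · intro S hS hmin
      obtain ⟨S₁, hS₁F, hle1, hH1⟩ := h₁.2 S hS hmin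
      have hmin1 : ∀ S'' : Set V, H _ (G.induce (S''ᶜ : Set V)) →
          ((S \ A₁) ∪ S₁).ncard ≤ S''.ncard := fun S'' h'' => hle1.trans (hmin S'' h'')
      obtain ⟨S₂, hS₂F, hle2, hH2⟩ := h₂.2 ((S \ A₁) ∪ S₁) hH1 hmin1
      refine ⟨S₁ ∪ S₂ ∪ (S ∩ (A' \ (A₁ ∪ A₂))),
        ⟨S₁, hS₁F, S₂, hS₂F, S ∩ (A' \ (A₁ ∪ A₂)), Set.inter_subset_right, rfl⟩, ?_⟩
      have key : (S \ A') ∪ (S₁ ∪ S₂ ∪ (S ∩ (A' \ (A₁ ∪ A₂)))) =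
          (((S \ A₁) ∪ S₁) \ A₂) ∪ S₂ := by
        ext x
        have hx1 : x ∈ S₁ → x ∈ A₁ := fun h => h₁.1 S₁ hS₁F h
        have hx2 : x ∈ S₂ → x ∈ A₂ := fun h => h₂.1 S₂ hS₂F h
        have hxd : x ∈ A₁ → x ∉ A₂ := fun h => Set.disjoint_left.mp hdisj h
        have hxs : x ∈ A₁ ∪ A₂ → x ∈ A' := fun h => hsub h
        simp only [Set.mem_union, Set.mem_diff, Set.mem_inter_iff] at *
        constructor
        · rintro (⟨hxS, hxA⟩ | (hx | hx) | ⟨hxS, hxA', hxn⟩)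
          · exact Or.inl ⟨Or.inl ⟨hxS, fun h => hxA (hxs (Or.inl h))⟩,
              fun h => hxA (hxs (Or.inr h))⟩
          · exact Or.inl ⟨Or.inr hx, hxd (hx1 hx)⟩
          · exact Or.inr hx
          · exact Or.inl ⟨Or.inl ⟨hxS, fun h => hxn (Or.inl h)⟩, fun h => hxn (Or.inr h)⟩
        · rintro (⟨hx | hx, hxn2⟩ | hx)
          · by_cases hA' : x ∈ A'
            · exact Or.inr (Or.inr ⟨hx.1, hA', fun h => h.elim hx.2 hxn2⟩)
            · exact Or.inl ⟨hx.1, hA'⟩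
          · exact Or.inr (Or.inl (Or.inl hx))
          · exact Or.inr (Or.inl (Or.inr hx))
      rw [key]
      exact ⟨hle2.trans hle1, hH2⟩
  · have himg : combineFam F₁ F₂ (A' \ (A₁ ∪ A₂)) ⊆
        (fun p : Set V × Set V × Set V => p.1 ∪ p.2.1 ∪ p.2.2) ''
          (F₁ ×ˢ F₂ ×ˢ {s : Set V | s ⊆ A' \ (A₁ ∪ A₂)}) := by
      rintro s ⟨s₁, hs₁, s₂, hs₂, st, hst, rfl⟩
      exact ⟨(s₁, s₂, st), ⟨hs₁, hs₂, hst⟩, rfl⟩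
    calc (combineFam F₁ F₂ (A' \ (A₁ ∪ A₂))).ncard
        ≤ ((fun p : Set V × Set V × Set V => p.1 ∪ p.2.1 ∪ p.2.2) ''
            (F₁ ×ˢ F₂ ×ˢ {s : Set V | s ⊆ A' \ (A₁ ∪ A₂)})).ncard :=
          Set.ncard_le_ncard himg (Set.toFinite _)
      _ ≤ (F₁ ×ˢ F₂ ×ˢ {s : Set V | s ⊆ A' \ (A₁ ∪ A₂)}).ncard :=
          Set.ncard_image_le (Set.toFinite _)
      _ = F₁.ncard * F₂.ncard * 2 ^ (A' \ (A₁ ∪ A₂)).ncard := by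
          rw [ncard_prod_aux, ncard_prod_aux, ncard_powerset_aux, mul_assoc]
end

section
/- Let G be an interval graph with a normalized interval model, let F be a graph containing G as an induced subgraph such that every vertex of F outside G has no neighbor in G outside a fixed set X ⊆ V(G), and let P be a chordless path in F. Then the intervals spanned by the maximal subpaths of P inside G are pairwise disjoint; moreover, if P avoids the closed neighborhood of some vertex u of G, these intervals are all disjoint from the interval of u. -/
/-- `[a, b]` (with `a ≤ b ≤ length p`) is a maximal segment of the walk `p` inside the
vertex set `U`: all vertices `p.getVert i` for `a ≤ i ≤ b` lie in `U` and the segment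
cannot be extended in either direction. -/
def MaxSeg {W : Type} {F : SimpleGraph W} (U : Set W) {s t : W} (p : F.Walk s t)
    (a b : ℕ) : Prop :=
  a ≤ b ∧ b ≤ p.length ∧ (∀ i : ℕ, a ≤ i → i ≤ b → p.getVert i ∈ U) ∧
    (a = 0 ∨ p.getVert (a - 1) ∉ U) ∧ (b = p.length ∨ p.getVert (b + 1) ∉ U)

/-- The interval spanned by the segment `[a, b]` of the walk `p`: the union of the
intervals of its vertices. -/
def spanInterval {W : Type} {F : SimpleGraph W} (lp rp : W → ℝ) {s t : W}
    (p : F.Walk s t) (a b : ℕ) : Set ℝ :=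
  ⋃ i ∈ Set.Icc a b, Set.Icc (lp (p.getVert i)) (rp (p.getVert i))

lemma myGetVert_mem_support {W : Type} {F : SimpleGraph W} {s t : W} (p : F.Walk s t)
    (i : ℕ) : p.getVert i ∈ p.support := by
  rcases le_or_gt i p.length with h | h
  · exact SimpleGraph.Walk.mem_support_iff_exists_getVert.mpr ⟨i, rfl, h⟩
  · rw [p.getVert_of_length_le h.le]
    exact p.end_mem_support

lemma myGetVert_inj {W : Type} {F : SimpleGraph W} {s t : W} (p : F.Walk s t)
    (hp : p.IsPath) {i j : ℕ} (hi : i ≤ p.length) (hj : j ≤ p.length)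
    (h : p.getVert i = p.getVert j) : i = j := by
  induction p generalizing i j with
  | nil => simp at hi hj; omega
  | @cons u v w hadj q ih =>
    rw [SimpleGraph.Walk.cons_isPath_iff] at hp
    match i, j with
    | 0, 0 => rfl
    | 0, k + 1 =>
      exfalso
      simp only [SimpleGraph.Walk.getVert_zero, SimpleGraph.Walk.getVert_cons_succ] at h
      exact hp.2 (h ▸ myGetVert_mem_support q k)
    | k + 1, 0 =>
      exfalso
      simp only [SimpleGraph.Walk.getVert_zero, SimpleGraph.Walk.getVert_cons_succ] at h
      exact hp.2 (h ▸ myGetVert_mem_support q k)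
    | k + 1, l + 1 =>
      simp only [SimpleGraph.Walk.getVert_cons_succ] at h
      simp only [SimpleGraph.Walk.length_cons] at hi hj
      exact congrArg Nat.succ (ih hp.1 (by omega) (by omega) h)

lemma maxSeg_gap {W : Type} {F : SimpleGraph W} (U : Set W) {s t : W} {p : F.Walk s t}
    {a b c d : ℕ} (h1 : MaxSeg U p a b) (h2 : MaxSeg U p c d) (hne : (a, b) ≠ (c, d)) :
    b + 1 < c ∨ d + 1 < a := by
  obtain ⟨hab, hbl, hU1, hl1, hr1⟩ := h1
  obtain ⟨hcd, hdl, hU2, hl2, hr2⟩ := h2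
  by_contra h
  push_neg at h
  obtain ⟨h1, h2⟩ := h
  -- rule out touching: c = b + 1
  have hc : c ≤ b := by
    rcases Nat.lt_or_ge c (b + 1) with h' | h'
    · omega
    · exfalso
      have hcb : c = b + 1 := by omega
      rcases hr1 with h'' | h''
      · omega
      · exact h'' (hcb ▸ hU2 c le_rfl hcd)
  have ha : a ≤ d := by
    rcases Nat.lt_or_ge a (d + 1) with h' | h'
    · omega
    · exfalso
      have had : a = d + 1 := by omega
      rcases hr2 with h'' | h''
      · omega
      · exact h'' (had ▸ hU1 a le_rfl hab)
  -- overlap: show a = c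
  have hac : a = c := by
    by_contra hne'
    rcases Nat.lt_or_ge a c with h' | h'
    · rcases hl2 with h'' | h''
      · omega
      · exact h'' (hU1 (c - 1) (by omega) (by omega))
    · have h' : c < a := by omega
      rcases hl1 with h'' | h''
      · omega
      · exact h'' (hU2 (a - 1) (by omega) (by omega))
  have hbd : b = d := by
    by_contra hne'
    rcases Nat.lt_or_ge b d with h' | h'
    · rcases hr1 with h'' | h''
      · omega
      · exact h'' (hU2 (b + 1) (by omega) (by omega))
    · have h' : d < b := by omega
      rcases hr2 with h'' | h''
      · omega
      · exact h'' (hU1 (d + 1) (by omega) (by omega))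
  exact hne (by rw [hac, hbd])

/-- Let `G` be an interval graph with a normalized interval model, realized as the
subgraph of a graph `F` induced by a vertex set `U`, such that every vertex of `F`
outside `U` has no neighbor in `U` outside a fixed set `X ⊆ U`. Let `p` be a chordless
path in `F`. Then the intervals spanned by the maximal segments of `p` inside `U` are
pairwise disjoint; moreover, if `p` avoids the closed neighborhood of some vertex
`u ∈ U`, these intervals are all disjoint from the interval of `u`. -/
theorem maximal_subpath_intervals_disjoint {W : Type} (F : SimpleGraph W)
    (U X : Set W) (hXU : X ⊆ U) (lp rp : W → ℝ)
    (hlt : ∀ v ∈ U, lp v < rp v)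
    (hmodel : ∀ u ∈ U, ∀ v ∈ U, u ≠ v →
      (F.Adj u v ↔ (Set.Icc (lp u) (rp u) ∩ Set.Icc (lp v) (rp v)).Nonempty))
    (hnorm : ∀ u ∈ U, ∀ v ∈ U, u ≠ v → lp u ≠ lp v ∧ rp u ≠ rp v ∧ lp u ≠ rp v)
    (hbd : ∀ w : W, w ∉ U → ∀ v ∈ U, F.Adj w v → v ∈ X)
    {s t : W} (p : F.Walk s t) (hpath : p.IsPath)
    (hchordless : ∀ i j : ℕ, i ≤ p.length → j ≤ p.length →
      F.Adj (p.getVert i) (p.getVert j) → (i + 1 = j ∨ j + 1 = i)) :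
    (∀ a b c d : ℕ, MaxSeg U p a b → MaxSeg U p c d → (a, b) ≠ (c, d) →
      Disjoint (spanInterval lp rp p a b) (spanInterval lp rp p c d)) ∧
    (∀ u ∈ U, (∀ x ∈ p.support, x ≠ u ∧ ¬ F.Adj u x) →
      ∀ a b : ℕ, MaxSeg U p a b →
        Disjoint (spanInterval lp rp p a b) (Set.Icc (lp u) (rp u))) := by
  constructor
  · intro a b c d hab hcd hne
    have hgap := maxSeg_gap U hab hcd hne
    rw [Set.disjoint_left]
    intro x hx hx'
    simp only [spanInterval, Set.mem_iUnion, Set.mem_Icc, exists_prop] at hx hx'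
    obtain ⟨i, hi, hxi⟩ := hx
    obtain ⟨j, hj, hxj⟩ := hx'
    have hiU := hab.2.2.1 i hi.1 hi.2
    have hjU := hcd.2.2.1 j hj.1 hj.2
    have hil : i ≤ p.length := le_trans hi.2 hab.2.1
    have hjl : j ≤ p.length := le_trans hj.2 hcd.2.1
    have hij : i ≠ j := by omega
    have hvne : p.getVert i ≠ p.getVert j := fun h => hij (myGetVert_inj p hpath hil hjl h)
    have hadj : F.Adj (p.getVert i) (p.getVert j) :=
      (hmodel _ hiU _ hjU hvne).mpr ⟨x, Set.mem_Icc.mpr hxi, Set.mem_Icc.mpr hxj⟩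
    have := hchordless i j hil hjl hadj
    omega
  · intro u hu hav a b hab
    rw [Set.disjoint_left]
    intro x hx hxu
    simp only [spanInterval, Set.mem_iUnion, Set.mem_Icc, exists_prop] at hx
    obtain ⟨i, hi, hxi⟩ := hx
    have hiU := hab.2.2.1 i hi.1 hi.2
    obtain ⟨hne, hna⟩ := hav _ (myGetVert_mem_support p i)
    exact hna ((hmodel u hu _ hiU (Ne.symm hne)).mpr ⟨x, hxu, Set.mem_Icc.mpr hxi⟩)
end
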